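/- For every parameter p with 0.709637 ≤ p ≤ 0.719023, writing p_i = α_p^i(p), the following chain of strict inequalities holds: 1/2 < p₉ < p₅ < p₃ < p₇ < p₁ < p₂ < 2/3 < p₈ < p₄ < p₆ < p. -/
import Mathlib

noncomputable section

/-- The folded belief dynamics `α_p : [1/2, 1] → ℝ`:
`α_p(t) = 2 - 3p + γ/t` if `t < 2/3` and `α_p(t) = 3p - 1 - γ/t` if `t ≥ 2/3`,
where `γ = 2p - 1`. -/
def alphaMap (p t : ℝ) : ℝ :=
  if t < 2/3 then 2 - 3*p + (2*p - 1)/t else 3*p - 1 - (2*p - 1)/t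

private lemma aux_stepL (a b N D : ℝ) (hN : N ≠ 0) (hD : D ≠ 0) : a + b/(N/D) = (a*N + b*D)/N := by
  field_simp

private lemma aux_stepH (a b N D : ℝ) (hN : N ≠ 0) (hD : D ≠ 0) : a - b/(N/D) = (a*N - b*D)/N := by
  field_simp

set_option maxHeartbeats 1000000 in
private lemma aux_hD1 (p : ℝ) (hA : (0:ℝ) ≤ p - 709637/1000000) (hB : (0:ℝ) ≤ 719023/1000000 - p) : (0:ℝ) < ((1)*p) := by
  have key : (((1)*p):ℝ) = (1) * (p - 709637/1000000)^1 * (719023/1000000 - p)^0 + (709637/1000000) := by ring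
  have t0 : (0:ℝ) ≤ (1) * (p - 709637/1000000)^1 * (719023/1000000 - p)^0 := mul_nonneg (mul_nonneg (by norm_num) (pow_nonneg hA 1)) (pow_nonneg hB 0)
  linarith only [key, t0]

set_option maxHeartbeats 1000000 in
private lemma aux_hD2 (p : ℝ) (hA : (0:ℝ) ≤ p - 709637/1000000) (hB : (0:ℝ) ≤ 719023/1000000 - p) : (0:ℝ) < ((1) + (-3)*p + (3)*p^2) := by
  have key : (((1) + (-3)*p + (3)*p^2):ℝ) = (628911/4693) * (p - 709637/1000000)^1 * (719023/1000000 - p)^1 + (642990/4693) * (p - 709637/1000000)^2 * (719023/1000000 - p)^0 + (381843015307/1000000000000) := by ring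
  have t0 : (0:ℝ) ≤ (628911/4693) * (p - 709637/1000000)^1 * (719023/1000000 - p)^1 := mul_nonneg (mul_nonneg (by norm_num) (pow_nonneg hA 1)) (pow_nonneg hB 1)
  have t1 : (0:ℝ) ≤ (642990/4693) * (p - 709637/1000000)^2 * (719023/1000000 - p)^0 := mul_nonneg (mul_nonneg (by norm_num) (pow_nonneg hA 2)) (pow_nonneg hB 0)
  linarith only [key, t0, t1]

set_option maxHeartbeats 1000000 in
private lemma aux_hD3 (p : ℝ) (hA : (0:ℝ) ≤ p - 709637/1000000) (hB : (0:ℝ) ≤ 719023/1000000 - p) : (0:ℝ) < ((2) + (-10)*p + (17)*p^2 + (-9)*p^3) := by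
  have key : (((2) + (-10)*p + (17)*p^2 + (-9)*p^3):ℝ) = (530871862237/88096996) * (p - 709637/1000000)^1 * (719023/1000000 - p)^2 + (260367024165/22024249) * (p - 709637/1000000)^2 * (719023/1000000 - p)^1 + (509803361459/88096996) * (p - 709637/1000000)^3 * (719023/1000000 - p)^0 + (248308578591759323/1000000000000000000) := by ring
  have t0 : (0:ℝ) ≤ (530871862237/88096996) * (p - 709637/1000000)^1 * (719023/1000000 - p)^2 := mul_nonneg (mul_nonneg (by norm_num) (pow_nonneg hA 1)) (pow_nonneg hB 2)
  have t1 : (0:ℝ) ≤ (260367024165/22024249) * (p - 709637/1000000)^2 * (719023/1000000 - p)^1 := mul_nonneg (mul_nonneg (by norm_num) (pow_nonneg hA 2)) (pow_nonneg hB 1)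
  have t2 : (0:ℝ) ≤ (509803361459/88096996) * (p - 709637/1000000)^3 * (719023/1000000 - p)^0 := mul_nonneg (mul_nonneg (by norm_num) (pow_nonneg hA 3)) (pow_nonneg hB 0)
  linarith only [key, t0, t1, t2]

set_option maxHeartbeats 1000000 in
private lemma aux_hD4 (p : ℝ) (hA : (0:ℝ) ≤ p - 709637/1000000) (hB : (0:ℝ) ≤ 719023/1000000 - p) : (0:ℝ) < ((3) + (-21)*p + (55)*p^2 + (-63)*p^3 + (27)*p^4) := by
  have key : (((3) + (-21)*p + (55)*p^2 + (-63)*p^3 + (27)*p^4):ℝ) = (119424283358472031/206719601114) * (p - 709637/1000000)^1 * (719023/1000000 - p)^3 + (182021826717240685/103359800557) * (p - 709637/1000000)^2 * (719023/1000000 - p)^2 + (370114885081208851/206719601114) * (p - 709637/1000000)^3 * (719023/1000000 - p)^1 + (62750548217214795/103359800557) * (p - 709637/1000000)^4 * (719023/1000000 - p)^0 + (128087141224984831912747/1000000000000000000000000) := by ring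
  have t0 : (0:ℝ) ≤ (119424283358472031/206719601114) * (p - 709637/1000000)^1 * (719023/1000000 - p)^3 := mul_nonneg (mul_nonneg (by norm_num) (pow_nonneg hA 1)) (pow_nonneg hB 3)
  have t1 : (0:ℝ) ≤ (182021826717240685/103359800557) * (p - 709637/1000000)^2 * (719023/1000000 - p)^2 := mul_nonneg (mul_nonneg (by norm_num) (pow_nonneg hA 2)) (pow_nonneg hB 2)
  have t2 : (0:ℝ) ≤ (370114885081208851/206719601114) * (p - 709637/1000000)^3 * (719023/1000000 - p)^1 := mul_nonneg (mul_nonneg (by norm_num) (pow_nonneg hA 3)) (pow_nonneg hB 1)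
  have t3 : (0:ℝ) ≤ (62750548217214795/103359800557) * (p - 709637/1000000)^4 * (719023/1000000 - p)^0 := mul_nonneg (mul_nonneg (by norm_num) (pow_nonneg hA 4)) (pow_nonneg hB 0)
  linarith only [key, t0, t1, t2, t3]

set_option maxHeartbeats 1000000 in
private lemma aux_hD5 (p : ℝ) (hA : (0:ℝ) ≤ p - 709637/1000000) (hB : (0:ℝ) ≤ 719023/1000000 - p) : (0:ℝ) < ((4) + (-37)*p + (136)*p^2 + (-248)*p^3 + (225)*p^4 + (-81)*p^5) := by
  have key : (((4) + (-37)*p + (136)*p^2 + (-248)*p^3 + (225)*p^4 + (-81)*p^5):ℝ) = (273356087508024136308795/7761080704224016) * (p - 709637/1000000)^1 * (719023/1000000 - p)^4 + (134807769630426149468275/970135088028002) * (p - 709637/1000000)^2 * (719023/1000000 - p)^3 + (796866004904874347793695/3880540352112008) * (p - 709637/1000000)^3 * (719023/1000000 - p)^2 + (130681287355087032183775/970135088028002) * (p - 709637/1000000)^4 * (719023/1000000 - p)^1 + (256823729918795579174919/7761080704224016) * (p - 709637/1000000)^5 * (719023/1000000 - p)^0 + (87597489518027278724797871483/1000000000000000000000000000000)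 := by ring
  have t0 : (0:ℝ) ≤ (273356087508024136308795/7761080704224016) * (p - 709637/1000000)^1 * (719023/1000000 - p)^4 := mul_nonneg (mul_nonneg (by norm_num) (pow_nonneg hA 1)) (pow_nonneg hB 4)
  have t1 : (0:ℝ) ≤ (134807769630426149468275/970135088028002) * (p - 709637/1000000)^2 * (719023/1000000 - p)^3 := mul_nonneg (mul_nonneg (by norm_num) (pow_nonneg hA 2)) (pow_nonneg hB 3)
  have t2 : (0:ℝ) ≤ (796866004904874347793695/3880540352112008) * (p - 709637/1000000)^3 * (719023/1000000 - p)^2 := mul_nonneg (mul_nonneg (by norm_num) (pow_nonneg hA 3)) (pow_nonneg hB 2)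
  have t3 : (0:ℝ) ≤ (130681287355087032183775/970135088028002) * (p - 709637/1000000)^4 * (719023/1000000 - p)^1 := mul_nonneg (mul_nonneg (by norm_num) (pow_nonneg hA 4)) (pow_nonneg hB 1)
  have t4 : (0:ℝ) ≤ (256823729918795579174919/7761080704224016) * (p - 709637/1000000)^5 * (719023/1000000 - p)^0 := mul_nonneg (mul_nonneg (by norm_num) (pow_nonneg hA 5)) (pow_nonneg hB 0)
  linarith only [key, t0, t1, t2, t3, t4]

set_option maxHeartbeats 1000000 in
private lemma aux_hD6 (p : ℝ) (hA : (0:ℝ) ≤ p - 709637/1000000) (hB : (0:ℝ) ≤ 719023/1000000 - p) : (0:ℝ) < ((-1) + (22)*p + (-150)*p^2 + (483)*p^3 + (-816)*p^4 + (702)*p^5 + (-243)*p^6) := by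
  have key : (((-1) + (22)*p + (-150)*p^2 + (483)*p^3 + (-816)*p^4 + (702)*p^5 + (-243)*p^6):ℝ) = (57463446142761599395710843347/36422751744923307088) * (p - 709637/1000000)^1 * (719023/1000000 - p)^5 + (136698779017879756382254395575/18211375872461653544) * (p - 709637/1000000)^2 * (719023/1000000 - p)^4 + (258709863970845274757528016145/18211375872461653544) * (p - 709637/1000000)^3 * (719023/1000000 - p)^3 + (121610460178462471077567857075/9105687936230826772) * (p - 709637/1000000)^4 * (719023/1000000 - p)^2 + (226896208167215160992718949627/36422751744923307088) * (p - 709637/1000000)^5 * (719023/1000000 - p)^1 + (20969987325664619406170991715/18211375872461653544) * (p - 709637/1000000)^6 * (719023/1000000 - p)^0 + (45186161439321402837105204215745013/1000000000000000000000000000000000000) := by ring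
  have t0 : (0:ℝ) ≤ (57463446142761599395710843347/36422751744923307088) * (p - 709637/1000000)^1 * (719023/1000000 - p)^5 := mul_nonneg (mul_nonneg (by norm_num) (pow_nonneg hA 1)) (pow_nonneg hB 5)
  have t1 : (0:ℝ) ≤ (136698779017879756382254395575/18211375872461653544) * (p - 709637/1000000)^2 * (719023/1000000 - p)^4 := mul_nonneg (mul_nonneg (by norm_num) (pow_nonneg hA 2)) (pow_nonneg hB 4)
  have t2 : (0:ℝ) ≤ (258709863970845274757528016145/18211375872461653544) * (p - 709637/1000000)^3 * (719023/1000000 - p)^3 := mul_nonneg (mul_nonneg (by norm_num) (pow_nonneg hA 3)) (pow_nonneg hB 3)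
  have t3 : (0:ℝ) ≤ (121610460178462471077567857075/9105687936230826772) * (p - 709637/1000000)^4 * (719023/1000000 - p)^2 := mul_nonneg (mul_nonneg (by norm_num) (pow_nonneg hA 4)) (pow_nonneg hB 2)
  have t4 : (0:ℝ) ≤ (226896208167215160992718949627/36422751744923307088) * (p - 709637/1000000)^5 * (719023/1000000 - p)^1 := mul_nonneg (mul_nonneg (by norm_num) (pow_nonneg hA 5)) (pow_nonneg hB 1)
  have t5 : (0:ℝ) ≤ (20969987325664619406170991715/18211375872461653544) * (p - 709637/1000000)^6 * (719023/1000000 - p)^0 := mul_nonneg (mul_nonneg (by norm_num) (pow_nonneg hA 6)) (pow_nonneg hB 0)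
  linarith only [key, t0, t1, t2, t3, t4, t5]

set_option maxHeartbeats 1000000 in
private lemma aux_hD7 (p : ℝ) (hA : (0:ℝ) ≤ p - 709637/1000000) (hB : (0:ℝ) ≤ 719023/1000000 - p) : (0:ℝ) < ((-6) + (92)*p + (-576)*p^2 + (1936)*p^3 + (-3802)*p^4 + (4383)*p^5 + (-2754)*p^6 + (729)*p^7) := by
  have key : (((-6) + (92)*p + (-576)*p^2 + (1936)*p^3 + (-3802)*p^4 + (4383)*p^5 + (-2754)*p^6 + (729)*p^7):ℝ) = (139432254340510579585612884095354727/683727895755700320655936) * (p - 709637/1000000)^1 * (719023/1000000 - p)^6 + (208951098607712315224072042913343645/170931973938925080163984) * (p - 709637/1000000)^2 * (719023/1000000 - p)^5 + (2087800781453703358500675869220123335/683727895755700320655936) * (p - 709637/1000000)^3 * (719023/1000000 - p)^4 + (347732222112449880870597611139577575/85465986969462540081992) * (p - 709637/1000000)^4 * (719023/1000000 - p)^3 + (2085331614340300102103887816553436621/683727895755700320655936) * (p - 709637/1000000)^5 * (719023/1000000 - p)^2 + (208466160215676977278676796985693445/170931973938925080163984) * (p - 709637/1000000)^6 * (719023/1000000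 - p)^1 + (138962162557079812791505212602031621/683727895755700320655936) * (p - 709637/1000000)^7 * (719023/1000000 - p)^0 + (30902356562877007898926833787507436629157/1000000000000000000000000000000000000000000) := by ring
  have t0 : (0:ℝ) ≤ (139432254340510579585612884095354727/683727895755700320655936) * (p - 709637/1000000)^1 * (719023/1000000 - p)^6 := mul_nonneg (mul_nonneg (by norm_num) (pow_nonneg hA 1)) (pow_nonneg hB 6)
  have t1 : (0:ℝ) ≤ (208951098607712315224072042913343645/170931973938925080163984) * (p - 709637/1000000)^2 * (719023/1000000 - p)^5 := mul_nonneg (mul_nonneg (by norm_num) (pow_nonneg hA 2)) (pow_nonneg hB 5)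
  have t2 : (0:ℝ) ≤ (2087800781453703358500675869220123335/683727895755700320655936) * (p - 709637/1000000)^3 * (719023/1000000 - p)^4 := mul_nonneg (mul_nonneg (by norm_num) (pow_nonneg hA 3)) (pow_nonneg hB 4)
  have t3 : (0:ℝ) ≤ (347732222112449880870597611139577575/85465986969462540081992) * (p - 709637/1000000)^4 * (719023/1000000 - p)^3 := mul_nonneg (mul_nonneg (by norm_num) (pow_nonneg hA 4)) (pow_nonneg hB 3)
  have t4 : (0:ℝ) ≤ (2085331614340300102103887816553436621/683727895755700320655936) * (p - 709637/1000000)^5 * (719023/1000000 - p)^2 := mul_nonneg (mul_nonneg (by norm_num) (pow_nonneg hA 5)) (pow_nonneg hB 2)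
  have t5 : (0:ℝ) ≤ (208466160215676977278676796985693445/170931973938925080163984) * (p - 709637/1000000)^6 * (719023/1000000 - p)^1 := mul_nonneg (mul_nonneg (by norm_num) (pow_nonneg hA 6)) (pow_nonneg hB 1)
  have t6 : (0:ℝ) ≤ (138962162557079812791505212602031621/683727895755700320655936) * (p - 709637/1000000)^7 * (719023/1000000 - p)^0 := mul_nonneg (mul_nonneg (by norm_num) (pow_nonneg hA 7)) (pow_nonneg hB 0)
  linarith only [key, t0, t1, t2, t3, t4, t5, t6]

set_option maxHeartbeats 1000000 in
private lemma aux_hD8 (p : ℝ) (hA : (0:ℝ) ≤ p - 709637/1000000) (hB : (0:ℝ) ≤ 719023/1000000 - p) : (0:ℝ) < ((5) + (-86)*p + (658)*p^2 + (-2881)*p^3 + (7828)*p^4 + (-13455)*p^5 + (14256)*p^6 + (-8505)*p^7 + (2187)*p^8) := by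
  have key : (((5) + (-86)*p + (658)*p^2 + (-2881)*p^3 + (7828)*p^4 + (-13455)*p^5 + (14256)*p^6 + (-8505)*p^7 + (2187)*p^8):ℝ) = (13944436831708487910383672907632891012471/802183753695375401209576912) * (p - 709637/1000000)^1 * (719023/1000000 - p)^7 + (49589915168672963452419423913511653519365/401091876847687700604788456) * (p - 709637/1000000)^2 * (719023/1000000 - p)^6 + (302506421683319362632407505330490530472637/802183753695375401209576912) * (p - 709637/1000000)^3 * (719023/1000000 - p)^5 + (256456296071463980134315021343893893833325/401091876847687700604788456) * (p - 709637/1000000)^4 * (719023/1000000 - p)^4 + (522128506108232908458627081126927678791577/802183753695375401209576912) * (p - 709637/1000000)^5 * (719023/1000000 - p)^3 + (159554963307087182416530428021194280625895/401091876847687700604788456) * (p - 709637/1000000)^6 * (719023/1000000 - p)^2 + (108420519595122325190759941792715317169731/802183753695375401209576912) * (p - 709637/1000000)^7 * (719023/1000000 - p)^1 + (7898767562844604027490120301506053097895/401091876847687700604788456) * (p - 709637/1000000)^8 * (719023/1000000 - p)^0 + (15940627598444004011060943465536533211896258027/1000000000000000000000000000000000000000000000000) := by ring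
  have t0 : (0:ℝ) ≤ (13944436831708487910383672907632891012471/802183753695375401209576912) * (p - 709637/1000000)^1 * (719023/1000000 - p)^7 := mul_nonneg (mul_nonneg (by norm_num) (pow_nonneg hA 1)) (pow_nonneg hB 7)
  have t1 : (0:ℝ) ≤ (49589915168672963452419423913511653519365/401091876847687700604788456) * (p - 709637/1000000)^2 * (719023/1000000 - p)^6 := mul_nonneg (mul_nonneg (by norm_num) (pow_nonneg hA 2)) (pow_nonneg hB 6)
  have t2 : (0:ℝ) ≤ (302506421683319362632407505330490530472637/802183753695375401209576912) * (p - 709637/1000000)^3 * (719023/1000000 - p)^5 := mul_nonneg (mul_nonneg (by norm_num) (pow_nonneg hA 3)) (pow_nonneg hB 5)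
  have t3 : (0:ℝ) ≤ (256456296071463980134315021343893893833325/401091876847687700604788456) * (p - 709637/1000000)^4 * (719023/1000000 - p)^4 := mul_nonneg (mul_nonneg (by norm_num) (pow_nonneg hA 4)) (pow_nonneg hB 4)
  have t4 : (0:ℝ) ≤ (522128506108232908458627081126927678791577/802183753695375401209576912) * (p - 709637/1000000)^5 * (719023/1000000 - p)^3 := mul_nonneg (mul_nonneg (by norm_num) (pow_nonneg hA 5)) (pow_nonneg hB 3)
  have t5 : (0:ℝ) ≤ (159554963307087182416530428021194280625895/401091876847687700604788456) * (p - 709637/1000000)^6 * (719023/1000000 - p)^2 := mul_nonneg (mul_nonneg (by norm_num) (pow_nonneg hA 6)) (pow_nonneg hB 2)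
  have t6 : (0:ℝ) ≤ (108420519595122325190759941792715317169731/802183753695375401209576912) * (p - 709637/1000000)^7 * (719023/1000000 - p)^1 := mul_nonneg (mul_nonneg (by norm_num) (pow_nonneg hA 7)) (pow_nonneg hB 1)
  have t7 : (0:ℝ) ≤ (7898767562844604027490120301506053097895/401091876847687700604788456) * (p - 709637/1000000)^8 * (719023/1000000 - p)^0 := mul_nonneg (mul_nonneg (by norm_num) (pow_nonneg hA 8)) (pow_nonneg hB 0)
  linarith only [key, t0, t1, t2, t3, t4, t5, t6, t7]

set_option maxHeartbeats 1000000 in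
private lemma aux_hD9 (p : ℝ) (hA : (0:ℝ) ≤ p - 709637/1000000) (hB : (0:ℝ) ≤ 719023/1000000 - p) : (0:ℝ) < ((16) + (-291)*p + (2334)*p^2 + (-10824)*p^3 + (31973)*p^4 + (-62381)*p^5 + (80397)*p^6 + (-66015)*p^7 + (31347)*p^8 + (-6561)*p^9) := by
  have key : (((16) + (-291)*p + (2334)*p^2 + (-10824)*p^3 + (31973)*p^4 + (-62381)*p^5 + (80397)*p^6 + (-66015)*p^7 + (31347)*p^8 + (-6561)*p^9):ℝ) = (58062418965486253429725336279034122524354033271/60234373697478348126024711168256) * (p - 709637/1000000)^1 * (719023/1000000 - p)^8 + (28876679734155292690883049465275096278168847695/3764648356092396757876544448016) * (p - 709637/1000000)^2 * (719023/1000000 - p)^7 + (401978385509583838761245409215759448891285800079/15058593424369587031506177792064) * (p - 709637/1000000)^3 * (719023/1000000 - p)^6 + (199772351454329078640191340877037858633167221165/3764648356092396757876544448016) * (p - 709637/1000000)^4 * (719023/1000000 - p)^5 + (1984826167257480365414074426955600973219308781177/30117186848739174063012355584128) * (p - 709637/1000000)^5 * (719023/1000000 - p)^4 + (197116161042331257776293980974958705298056436465/3764648356092396757876544448016)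 * (p - 709637/1000000)^6 * (719023/1000000 - p)^3 + (391337869979098122756627170681904039254357388531/15058593424369587031506177792064) * (p - 709637/1000000)^7 * (719023/1000000 - p)^2 + (27733807823447845251008545149642315958493631395/3764648356092396757876544448016) * (p - 709637/1000000)^8 * (719023/1000000 - p)^1 + (55004225432645561678836998247678749010658909839/60234373697478348126024711168256) * (p - 709637/1000000)^9 * (719023/1000000 - p)^0 + (10901632401200679608744772026337612952374413499481403/1000000000000000000000000000000000000000000000000000000) := by ring
  have t0 : (0:ℝ) ≤ (58062418965486253429725336279034122524354033271/60234373697478348126024711168256) * (p - 709637/1000000)^1 * (719023/1000000 - p)^8 := mul_nonneg (mul_nonneg (by norm_num) (pow_nonneg hA 1)) (pow_nonneg hB 8)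
  have t1 : (0:ℝ) ≤ (28876679734155292690883049465275096278168847695/3764648356092396757876544448016) * (p - 709637/1000000)^2 * (719023/1000000 - p)^7 := mul_nonneg (mul_nonneg (by norm_num) (pow_nonneg hA 2)) (pow_nonneg hB 7)
  have t2 : (0:ℝ) ≤ (401978385509583838761245409215759448891285800079/15058593424369587031506177792064) * (p - 709637/1000000)^3 * (719023/1000000 - p)^6 := mul_nonneg (mul_nonneg (by norm_num) (pow_nonneg hA 3)) (pow_nonneg hB 6)
  have t3 : (0:ℝ) ≤ (199772351454329078640191340877037858633167221165/3764648356092396757876544448016) * (p - 709637/1000000)^4 * (719023/1000000 - p)^5 := mul_nonneg (mul_nonneg (by norm_num) (pow_nonneg hA 4)) (pow_nonneg hB 5)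
  have t4 : (0:ℝ) ≤ (1984826167257480365414074426955600973219308781177/30117186848739174063012355584128) * (p - 709637/1000000)^5 * (719023/1000000 - p)^4 := mul_nonneg (mul_nonneg (by norm_num) (pow_nonneg hA 5)) (pow_nonneg hB 4)
  have t5 : (0:ℝ) ≤ (197116161042331257776293980974958705298056436465/3764648356092396757876544448016) * (p - 709637/1000000)^6 * (719023/1000000 - p)^3 := mul_nonneg (mul_nonneg (by norm_num) (pow_nonneg hA 6)) (pow_nonneg hB 3)
  have t6 : (0:ℝ) ≤ (391337869979098122756627170681904039254357388531/15058593424369587031506177792064) * (p - 709637/1000000)^7 * (719023/1000000 - p)^2 := mul_nonneg (mul_nonneg (by norm_num) (pow_nonneg hA 7)) (pow_nonneg hB 2)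
  have t7 : (0:ℝ) ≤ (27733807823447845251008545149642315958493631395/3764648356092396757876544448016) * (p - 709637/1000000)^8 * (719023/1000000 - p)^1 := mul_nonneg (mul_nonneg (by norm_num) (pow_nonneg hA 8)) (pow_nonneg hB 1)
  have t8 : (0:ℝ) ≤ (55004225432645561678836998247678749010658909839/60234373697478348126024711168256) * (p - 709637/1000000)^9 * (719023/1000000 - p)^0 := mul_nonneg (mul_nonneg (by norm_num) (pow_nonneg hA 9)) (pow_nonneg hB 0)
  linarith only [key, t0, t1, t2, t3, t4, t5, t6, t7, t8]

set_option maxHeartbeats 1000000 in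
private lemma aux_hbr1 (p : ℝ) (hA : (0:ℝ) ≤ p - 709637/1000000) (hB : (0:ℝ) ≤ 719023/1000000 - p) : (0:ℝ) < ((-3) + (11)*p + (-9)*p^2) := by
  have key : (((-3) + (11)*p + (-9)*p^2):ℝ) = (928970/4693) * (p - 709637/1000000)^0 * (719023/1000000 - p)^2 + (971207/4693) * (p - 709637/1000000)^1 * (719023/1000000 - p)^1 + (256306329239/1000000000000) := by ring
  have t0 : (0:ℝ) ≤ (928970/4693) * (p - 709637/1000000)^0 * (719023/1000000 - p)^2 := mul_nonneg (mul_nonneg (by norm_num) (pow_nonneg hA 0)) (pow_nonneg hB 2)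
  have t1 : (0:ℝ) ≤ (971207/4693) * (p - 709637/1000000)^1 * (719023/1000000 - p)^1 := mul_nonneg (mul_nonneg (by norm_num) (pow_nonneg hA 1)) (pow_nonneg hB 1)
  linarith only [key, t0, t1]

set_option maxHeartbeats 1000000 in
private lemma aux_hbr2 (p : ℝ) (hA : (0:ℝ) ≤ p - 709637/1000000) (hB : (0:ℝ) ≤ 719023/1000000 - p) : (0:ℝ) < ((-4) + (24)*p + (-45)*p^2 + (27)*p^3) := by
  have key : (((-4) + (24)*p + (-45)*p^2 + (27)*p^3):ℝ) = (923028413289/88096996) * (p - 709637/1000000)^1 * (719023/1000000 - p)^2 + (490799927505/22024249) * (p - 709637/1000000)^2 * (719023/1000000 - p)^1 + (1042549915623/88096996) * (p - 709637/1000000)^3 * (719023/1000000 - p)^0 + (18760294838722031/1000000000000000000) := by ring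
  have t0 : (0:ℝ) ≤ (923028413289/88096996) * (p - 709637/1000000)^1 * (719023/1000000 - p)^2 := mul_nonneg (mul_nonneg (by norm_num) (pow_nonneg hA 1)) (pow_nonneg hB 2)
  have t1 : (0:ℝ) ≤ (490799927505/22024249) * (p - 709637/1000000)^2 * (719023/1000000 - p)^1 := mul_nonneg (mul_nonneg (by norm_num) (pow_nonneg hA 2)) (pow_nonneg hB 1)
  have t2 : (0:ℝ) ≤ (1042549915623/88096996) * (p - 709637/1000000)^3 * (719023/1000000 - p)^0 := mul_nonneg (mul_nonneg (by norm_num) (pow_nonneg hA 3)) (pow_nonneg hB 0)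
  linarith only [key, t0, t1, t2]

set_option maxHeartbeats 1000000 in
private lemma aux_hbr3 (p : ℝ) (hA : (0:ℝ) ≤ p - 709637/1000000) (hB : (0:ℝ) ≤ 719023/1000000 - p) : (0:ℝ) < ((-5) + (43)*p + (-131)*p^2 + (171)*p^3 + (-81)*p^4) := by
  have key : (((-5) + (43)*p + (-131)*p^2 + (171)*p^3 + (-81)*p^4):ℝ) = (60800804286894385/103359800557) * (p - 709637/1000000)^0 * (719023/1000000 - p)^4 + (393569515338238987/206719601114) * (p - 709637/1000000)^1 * (719023/1000000 - p)^3 + (211824335293894255/103359800557) * (p - 709637/1000000)^2 * (719023/1000000 - p)^2 + (151697508111028527/206719601114) * (p - 709637/1000000)^3 * (719023/1000000 - p)^1 + (107790322716269824680879/1000000000000000000000000) := by ring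
  have t0 : (0:ℝ) ≤ (60800804286894385/103359800557) * (p - 709637/1000000)^0 * (719023/1000000 - p)^4 := mul_nonneg (mul_nonneg (by norm_num) (pow_nonneg hA 0)) (pow_nonneg hB 4)
  have t1 : (0:ℝ) ≤ (393569515338238987/206719601114) * (p - 709637/1000000)^1 * (719023/1000000 - p)^3 := mul_nonneg (mul_nonneg (by norm_num) (pow_nonneg hA 1)) (pow_nonneg hB 3)
  have t2 : (0:ℝ) ≤ (211824335293894255/103359800557) * (p - 709637/1000000)^2 * (719023/1000000 - p)^2 := mul_nonneg (mul_nonneg (by norm_num) (pow_nonneg hA 2)) (pow_nonneg hB 2)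
  have t3 : (0:ℝ) ≤ (151697508111028527/206719601114) * (p - 709637/1000000)^3 * (719023/1000000 - p)^1 := mul_nonneg (mul_nonneg (by norm_num) (pow_nonneg hA 3)) (pow_nonneg hB 1)
  linarith only [key, t0, t1, t2, t3]

set_option maxHeartbeats 1000000 in
private lemma aux_hbr4 (p : ℝ) (hA : (0:ℝ) ≤ p - 709637/1000000) (hB : (0:ℝ) ≤ 719023/1000000 - p) : (0:ℝ) < ((6) + (-69)*p + (298)*p^2 + (-618)*p^3 + (621)*p^4 + (-243)*p^5) := by
  have key : (((6) + (-69)*p + (298)*p^2 + (-618)*p^3 + (621)*p^4 + (-243)*p^5):ℝ) = (233537581719049982475243/7761080704224016) * (p - 709637/1000000)^0 * (719023/1000000 - p)^5 + (129045238031443259162825/970135088028002) * (p - 709637/1000000)^1 * (719023/1000000 - p)^4 + (851509396988550101995515/3880540352112008) * (p - 709637/1000000)^2 * (719023/1000000 - p)^3 + (155412942311778017939325/970135088028002) * (p - 709637/1000000)^3 * (719023/1000000 - p)^2 + (339110952992231156786815/7761080704224016) * (p - 709637/1000000)^4 * (719023/1000000 - p)^1 + (4426202362097169213386983651/1000000000000000000000000000000)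 := by ring
  have t0 : (0:ℝ) ≤ (233537581719049982475243/7761080704224016) * (p - 709637/1000000)^0 * (719023/1000000 - p)^5 := mul_nonneg (mul_nonneg (by norm_num) (pow_nonneg hA 0)) (pow_nonneg hB 5)
  have t1 : (0:ℝ) ≤ (129045238031443259162825/970135088028002) * (p - 709637/1000000)^1 * (719023/1000000 - p)^4 := mul_nonneg (mul_nonneg (by norm_num) (pow_nonneg hA 1)) (pow_nonneg hB 4)
  have t2 : (0:ℝ) ≤ (851509396988550101995515/3880540352112008) * (p - 709637/1000000)^2 * (719023/1000000 - p)^3 := mul_nonneg (mul_nonneg (by norm_num) (pow_nonneg hA 2)) (pow_nonneg hB 3)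
  have t3 : (0:ℝ) ≤ (155412942311778017939325/970135088028002) * (p - 709637/1000000)^3 * (719023/1000000 - p)^2 := mul_nonneg (mul_nonneg (by norm_num) (pow_nonneg hA 3)) (pow_nonneg hB 2)
  have t4 : (0:ℝ) ≤ (339110952992231156786815/7761080704224016) * (p - 709637/1000000)^4 * (719023/1000000 - p)^1 := mul_nonneg (mul_nonneg (by norm_num) (pow_nonneg hA 4)) (pow_nonneg hB 1)
  linarith only [key, t0, t1, t2, t3, t4]

set_option maxHeartbeats 1000000 in
private lemma aux_hbr5 (p : ℝ) (hA : (0:ℝ) ≤ p - 709637/1000000) (hB : (0:ℝ) ≤ 719023/1000000 - p) : (0:ℝ) < ((11) + (-140)*p + (722)*p^2 + (-1945)*p^3 + (2898)*p^4 + (-2268)*p^5 + (729)*p^6) := by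
  have key : (((11) + (-140)*p + (722)*p^2 + (-1945)*p^3 + (2898)*p^4 + (-2268)*p^5 + (729)*p^6):ℝ) = (100965749079739338121662469959/36422751744923307088) * (p - 709637/1000000)^1 * (719023/1000000 - p)^5 + (265812785222077396880734313275/18211375872461653544) * (p - 709637/1000000)^2 * (719023/1000000 - p)^4 + (559967491514043121394210951565/18211375872461653544) * (p - 709637/1000000)^3 * (719023/1000000 - p)^3 + (294964196627223825031693928775/9105687936230826772) * (p - 709637/1000000)^4 * (719023/1000000 - p)^2 + (621585404257846353666962151119/36422751744923307088) * (p - 709637/1000000)^5 * (719023/1000000 - p)^1 + (65501902982403931368946524855/18211375872461653544) * (p - 709637/1000000)^6 * (719023/1000000 - p)^0 + (39636494718090348938280130318764961/1000000000000000000000000000000000000) := by ring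
  have t0 : (0:ℝ) ≤ (100965749079739338121662469959/36422751744923307088) * (p - 709637/1000000)^1 * (719023/1000000 - p)^5 := mul_nonneg (mul_nonneg (by norm_num) (pow_nonneg hA 1)) (pow_nonneg hB 5)
  have t1 : (0:ℝ) ≤ (265812785222077396880734313275/18211375872461653544) * (p - 709637/1000000)^2 * (719023/1000000 - p)^4 := mul_nonneg (mul_nonneg (by norm_num) (pow_nonneg hA 2)) (pow_nonneg hB 4)
  have t2 : (0:ℝ) ≤ (559967491514043121394210951565/18211375872461653544) * (p - 709637/1000000)^3 * (719023/1000000 - p)^3 := mul_nonneg (mul_nonneg (by norm_num) (pow_nonneg hA 3)) (pow_nonneg hB 3)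
  have t3 : (0:ℝ) ≤ (294964196627223825031693928775/9105687936230826772) * (p - 709637/1000000)^4 * (719023/1000000 - p)^2 := mul_nonneg (mul_nonneg (by norm_num) (pow_nonneg hA 4)) (pow_nonneg hB 2)
  have t4 : (0:ℝ) ≤ (621585404257846353666962151119/36422751744923307088) * (p - 709637/1000000)^5 * (719023/1000000 - p)^1 := mul_nonneg (mul_nonneg (by norm_num) (pow_nonneg hA 5)) (pow_nonneg hB 1)
  have t5 : (0:ℝ) ≤ (65501902982403931368946524855/18211375872461653544) * (p - 709637/1000000)^6 * (719023/1000000 - p)^0 := mul_nonneg (mul_nonneg (by norm_num) (pow_nonneg hA 6)) (pow_nonneg hB 0)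
  linarith only [key, t0, t1, t2, t3, t4, t5]

set_option maxHeartbeats 1000000 in
private lemma aux_hbr6 (p : ℝ) (hA : (0:ℝ) ≤ p - 709637/1000000) (hB : (0:ℝ) ≤ 719023/1000000 - p) : (0:ℝ) < ((-16) + (232)*p + (-1428)*p^2 + (4842)*p^3 + (-9774)*p^4 + (11745)*p^5 + (-7776)*p^6 + (2187)*p^7) := by
  have key : (((-16) + (232)*p + (-1428)*p^2 + (4842)*p^3 + (-9774)*p^4 + (11745)*p^5 + (-7776)*p^6 + (2187)*p^7):ℝ) = (188442978450485341173995278898064181/683727895755700320655936) * (p - 709637/1000000)^1 * (719023/1000000 - p)^6 + (295992291644615833511996494243030935/170931973938925080163984) * (p - 709637/1000000)^2 * (719023/1000000 - p)^5 + (3100133200451309826383768313900370005/683727895755700320655936) * (p - 709637/1000000)^3 * (719023/1000000 - p)^4 + (541265882009579425699129103123732725/85465986969462540081992) * (p - 709637/1000000)^4 * (719023/1000000 - p)^3 + (3402642647496640125099701937952309863/683727895755700320655936) * (p - 709637/1000000)^5 * (719023/1000000 - p)^2 + (356562297828486532030969457900080335/170931973938925080163984) * (p - 709637/1000000)^6 *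 (719023/1000000 - p)^1 + (249126589065922483125147704086094863/683727895755700320655936) * (p - 709637/1000000)^7 * (719023/1000000 - p)^0 + (2334746809988218022570092931032283887471/1000000000000000000000000000000000000000000) := by ring
  have t0 : (0:ℝ) ≤ (188442978450485341173995278898064181/683727895755700320655936) * (p - 709637/1000000)^1 * (719023/1000000 - p)^6 := mul_nonneg (mul_nonneg (by norm_num) (pow_nonneg hA 1)) (pow_nonneg hB 6)
  have t1 : (0:ℝ) ≤ (295992291644615833511996494243030935/170931973938925080163984) * (p - 709637/1000000)^2 * (719023/1000000 - p)^5 := mul_nonneg (mul_nonneg (by norm_num) (pow_nonneg hA 2)) (pow_nonneg hB 5)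
  have t2 : (0:ℝ) ≤ (3100133200451309826383768313900370005/683727895755700320655936) * (p - 709637/1000000)^3 * (719023/1000000 - p)^4 := mul_nonneg (mul_nonneg (by norm_num) (pow_nonneg hA 3)) (pow_nonneg hB 4)
  have t3 : (0:ℝ) ≤ (541265882009579425699129103123732725/85465986969462540081992) * (p - 709637/1000000)^4 * (719023/1000000 - p)^3 := mul_nonneg (mul_nonneg (by norm_num) (pow_nonneg hA 4)) (pow_nonneg hB 3)
  have t4 : (0:ℝ) ≤ (3402642647496640125099701937952309863/683727895755700320655936) * (p - 709637/1000000)^5 * (719023/1000000 - p)^2 := mul_nonneg (mul_nonneg (by norm_num) (pow_nonneg hA 5)) (pow_nonneg hB 2)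
  have t5 : (0:ℝ) ≤ (356562297828486532030969457900080335/170931973938925080163984) * (p - 709637/1000000)^6 * (719023/1000000 - p)^1 := mul_nonneg (mul_nonneg (by norm_num) (pow_nonneg hA 6)) (pow_nonneg hB 1)
  have t6 : (0:ℝ) ≤ (249126589065922483125147704086094863/683727895755700320655936) * (p - 709637/1000000)^7 * (719023/1000000 - p)^0 := mul_nonneg (mul_nonneg (by norm_num) (pow_nonneg hA 7)) (pow_nonneg hB 0)
  linarith only [key, t0, t1, t2, t3, t4, t5, t6]

set_option maxHeartbeats 1000000 in
private lemma aux_hbr7 (p : ℝ) (hA : (0:ℝ) ≤ p - 709637/1000000) (hB : (0:ℝ) ≤ 719023/1000000 - p) : (0:ℝ) < ((-27) + (442)*p + (-3126)*p^2 + (12515)*p^3 + (-31088)*p^4 + (49131)*p^5 + (-48276)*p^6 + (26973)*p^7 + (-6561)*p^8) := by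
  have key : (((-27) + (442)*p + (-3126)*p^2 + (12515)*p^3 + (-31088)*p^4 + (49131)*p^5 + (-48276)*p^6 + (26973)*p^7 + (-6561)*p^8):ℝ) = (6326032368898835483532209329264206668685/401091876847687700604788456) * (p - 709637/1000000)^0 * (719023/1000000 - p)^8 + (94241270992383548901767551569167315411547/802183753695375401209576912) * (p - 709637/1000000)^1 * (719023/1000000 - p)^7 + (150263741919568483241881221447453989540085/401091876847687700604788456) * (p - 709637/1000000)^2 * (719023/1000000 - p)^6 + (531897654237849641107625939104494034224809/802183753695375401209576912) * (p - 709637/1000000)^3 * (719023/1000000 - p)^5 + (282160697402689344127491683808905777182975/401091876847687700604788456) * (p - 709637/1000000)^4 * (719023/1000000 - p)^4 + (358927454801945636046893377914322415767989/802183753695375401209576912) * (p - 709637/1000000)^5 * (719023/1000000 - p)^3 + (63363548308281847691634952717841244970495/401091876847687700604788456) * (p - 709637/1000000)^6 * (719023/1000000 - p)^2 + (19161659971961322640788624026282705439767/802183753695375401209576912) * (p - 709637/1000000)^7 * (719023/1000000 - p)^1 + (13032812093390252247095904110173692121948787359/1000000000000000000000000000000000000000000000000) := by ring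
  have t0 : (0:ℝ) ≤ (6326032368898835483532209329264206668685/401091876847687700604788456) * (p - 709637/1000000)^0 * (719023/1000000 - p)^8 := mul_nonneg (mul_nonneg (by norm_num) (pow_nonneg hA 0)) (pow_nonneg hB 8)
  have t1 : (0:ℝ) ≤ (94241270992383548901767551569167315411547/802183753695375401209576912) * (p - 709637/1000000)^1 * (719023/1000000 - p)^7 := mul_nonneg (mul_nonneg (by norm_num) (pow_nonneg hA 1)) (pow_nonneg hB 7)
  have t2 : (0:ℝ) ≤ (150263741919568483241881221447453989540085/401091876847687700604788456) * (p - 709637/1000000)^2 * (719023/1000000 - p)^6 := mul_nonneg (mul_nonneg (by norm_num) (pow_nonneg hA 2)) (pow_nonneg hB 6)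
  have t3 : (0:ℝ) ≤ (531897654237849641107625939104494034224809/802183753695375401209576912) * (p - 709637/1000000)^3 * (719023/1000000 - p)^5 := mul_nonneg (mul_nonneg (by norm_num) (pow_nonneg hA 3)) (pow_nonneg hB 5)
  have t4 : (0:ℝ) ≤ (282160697402689344127491683808905777182975/401091876847687700604788456) * (p - 709637/1000000)^4 * (719023/1000000 - p)^4 := mul_nonneg (mul_nonneg (by norm_num) (pow_nonneg hA 4)) (pow_nonneg hB 4)
  have t5 : (0:ℝ) ≤ (358927454801945636046893377914322415767989/802183753695375401209576912) * (p - 709637/1000000)^5 * (719023/1000000 - p)^3 := mul_nonneg (mul_nonneg (by norm_num) (pow_nonneg hA 5)) (pow_nonneg hB 3)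
  have t6 : (0:ℝ) ≤ (63363548308281847691634952717841244970495/401091876847687700604788456) * (p - 709637/1000000)^6 * (719023/1000000 - p)^2 := mul_nonneg (mul_nonneg (by norm_num) (pow_nonneg hA 6)) (pow_nonneg hB 2)
  have t7 : (0:ℝ) ≤ (19161659971961322640788624026282705439767/802183753695375401209576912) * (p - 709637/1000000)^7 * (719023/1000000 - p)^1 := mul_nonneg (mul_nonneg (by norm_num) (pow_nonneg hA 7)) (pow_nonneg hB 1)
  linarith only [key, t0, t1, t2, t3, t4, t5, t6, t7]

set_option maxHeartbeats 1000000 in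
private lemma aux_hbr8 (p : ℝ) (hA : (0:ℝ) ≤ p - 709637/1000000) (hB : (0:ℝ) ≤ 719023/1000000 - p) : (0:ℝ) < ((38) + (-701)*p + (5686)*p^2 + (-26710)*p^3 + (80263)*p^4 + (-160233)*p^5 + (212679)*p^6 + (-181035)*p^7 + (89667)*p^8 + (-19683)*p^9) := by
  have key : (((38) + (-701)*p + (5686)*p^2 + (-26710)*p^3 + (80263)*p^4 + (-160233)*p^5 + (212679)*p^6 + (-181035)*p^7 + (89667)*p^8 + (-19683)*p^9):ℝ) = (87747885713090643843172854905157452100663270483/60234373697478348126024711168256) * (p - 709637/1000000)^0 * (719023/1000000 - p)^9 + (46300452437933671769474558528837073767468470885/3764648356092396757876544448016) * (p - 709637/1000000)^1 * (719023/1000000 - p)^8 + (683754059551461647618262204791093432039191606687/15058593424369587031506177792064) * (p - 709637/1000000)^2 * (719023/1000000 - p)^7 + (360473937105248469710345192006382372685579520095/3764648356092396757876544448016) * (p - 709637/1000000)^3 * (719023/1000000 - p)^6 + (3799301124218629866276181655927601544423503348389/30117186848739174063012355584128) * (p - 709637/1000000)^4 * (719023/1000000 - p)^5 + (400283314460983088568007018671749833791737047995/3764648356092396757876544448016)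 * (p - 709637/1000000)^5 * (719023/1000000 - p)^4 + (843145801593249520855405976030545997517137917723/15058593424369587031506177792064) * (p - 709637/1000000)^6 * (719023/1000000 - p)^3 + (63405699129480850690788503712928418245739399985/3764648356092396757876544448016) * (p - 709637/1000000)^7 * (719023/1000000 - p)^2 + (133464871410327834705122942997609461065327741307/60234373697478348126024711168256) * (p - 709637/1000000)^8 * (719023/1000000 - p)^1 + (40351410962021000408731799964587913898987690771/1000000000000000000000000000000000000000000000000000000) := by ring
  have t0 : (0:ℝ) ≤ (87747885713090643843172854905157452100663270483/60234373697478348126024711168256) * (p - 709637/1000000)^0 * (719023/1000000 - p)^9 := mul_nonneg (mul_nonneg (by norm_num) (pow_nonneg hA 0)) (pow_nonneg hB 9)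
  have t1 : (0:ℝ) ≤ (46300452437933671769474558528837073767468470885/3764648356092396757876544448016) * (p - 709637/1000000)^1 * (719023/1000000 - p)^8 := mul_nonneg (mul_nonneg (by norm_num) (pow_nonneg hA 1)) (pow_nonneg hB 8)
  have t2 : (0:ℝ) ≤ (683754059551461647618262204791093432039191606687/15058593424369587031506177792064) * (p - 709637/1000000)^2 * (719023/1000000 - p)^7 := mul_nonneg (mul_nonneg (by norm_num) (pow_nonneg hA 2)) (pow_nonneg hB 7)
  have t3 : (0:ℝ) ≤ (360473937105248469710345192006382372685579520095/3764648356092396757876544448016) * (p - 709637/1000000)^3 * (719023/1000000 - p)^6 := mul_nonneg (mul_nonneg (by norm_num) (pow_nonneg hA 3)) (pow_nonneg hB 6)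
  have t4 : (0:ℝ) ≤ (3799301124218629866276181655927601544423503348389/30117186848739174063012355584128) * (p - 709637/1000000)^4 * (719023/1000000 - p)^5 := mul_nonneg (mul_nonneg (by norm_num) (pow_nonneg hA 4)) (pow_nonneg hB 5)
  have t5 : (0:ℝ) ≤ (400283314460983088568007018671749833791737047995/3764648356092396757876544448016) * (p - 709637/1000000)^5 * (719023/1000000 - p)^4 := mul_nonneg (mul_nonneg (by norm_num) (pow_nonneg hA 5)) (pow_nonneg hB 4)
  have t6 : (0:ℝ) ≤ (843145801593249520855405976030545997517137917723/15058593424369587031506177792064) * (p - 709637/1000000)^6 * (719023/1000000 - p)^3 := mul_nonneg (mul_nonneg (by norm_num) (pow_nonneg hA 6)) (pow_nonneg hB 3)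
  have t7 : (0:ℝ) ≤ (63405699129480850690788503712928418245739399985/3764648356092396757876544448016) * (p - 709637/1000000)^7 * (719023/1000000 - p)^2 := mul_nonneg (mul_nonneg (by norm_num) (pow_nonneg hA 7)) (pow_nonneg hB 2)
  have t8 : (0:ℝ) ≤ (133464871410327834705122942997609461065327741307/60234373697478348126024711168256) * (p - 709637/1000000)^8 * (719023/1000000 - p)^1 := mul_nonneg (mul_nonneg (by norm_num) (pow_nonneg hA 8)) (pow_nonneg hB 1)
  linarith only [key, t0, t1, t2, t3, t4, t5, t6, t7, t8]

set_option maxHeartbeats 1000000 in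
private lemma aux_hf95 (p : ℝ) (hA : (0:ℝ) ≤ p - 709637/1000000) (hB : (0:ℝ) ≤ 719023/1000000 - p) : (0:ℝ) < ((28) + (-736)*p + (8859)*p^2 + (-64691)*p^3 + (319894)*p^4 + (-1131600)*p^5 + (2946834)*p^6 + (-5720977)*p^7 + (8281005)*p^8 + (-8826993)*p^9 + (6734529)*p^10 + (-3482190)*p^11 + (1093500)*p^12 + (-157464)*p^13) := by
  have key : (((28) + (-736)*p + (8859)*p^2 + (-64691)*p^3 + (319894)*p^4 + (-1131600)*p^5 + (2946834)*p^6 + (-5720977)*p^7 + (8281005)*p^8 + (-8826993)*p^9 + (6734529)*p^10 + (-3482190)*p^11 + (1093500)*p^12 + (-157464)*p^13):ℝ) = (77813124749644285546999414361642353177666563181571200007059545062601/58435479429314725569612406963615561328661504512) * (p - 709637/1000000)^1 * (719023/1000000 - p)^12 + (123390518604487310490185395009474024027028245839808566827828055097635/7304434928664340696201550870451945166082688064) * (p - 709637/1000000)^2 * (719023/1000000 - p)^11 + (2868437340112040450568112458028488379133929475249573933690054542773031/29217739714657362784806203481807780664330752256) * (p - 709637/1000000)^3 * (719023/1000000 -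 p)^10 + (2524713271242464357495295502107117638000563139426836336203918434739475/7304434928664340696201550870451945166082688064) * (p - 709637/1000000)^4 * (719023/1000000 - p)^9 + (47978124571875861390977479309892641062888938926248968765480907092948259/58435479429314725569612406963615561328661504512) * (p - 709637/1000000)^5 * (719023/1000000 - p)^8 + (5063097956978574543639933485214833465753350601251271611671127831616155/3652217464332170348100775435225972583041344032) * (p - 709637/1000000)^6 * (719023/1000000 - p)^7 + (24923787030392341916255827145369336136407755653309055821173771942672813/14608869857328681392403101740903890332165376128) * (p - 709637/1000000)^7 * (719023/1000000 - p)^6 + (5631439452801755395590433034452504415091663161852449706748262604757255/3652217464332170348100775435225972583041344032) * (p - 709637/1000000)^8 * (719023/1000000 - p)^5 + (59354837206928266252690981120708639882034424114743763792386597106075455/58435479429314725569612406963615561328661504512) * (p - 709637/1000000)^9 * (719023/1000000 - p)^4 + (3474145645850535209066373570894605141942814482983416889079016150107975/7304434928664340696201550870451945166082688064) * (p - 709637/1000000)^10 * (719023/1000000 - p)^3 + (4390605938052137967872720985891504920409872110091948245122842642945103/29217739714657362784806203481807780664330752256) * (p - 709637/1000000)^11 * (719023/1000000 - p)^2 + (210102263846913698355562040190104380558014073487524861237477501731135/7304434928664340696201550870451945166082688064)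 * (p - 709637/1000000)^12 * (719023/1000000 - p)^1 + (147402571388987190623276733149947179834476305347902172244367082692917/58435479429314725569612406963615561328661504512) * (p - 709637/1000000)^13 * (719023/1000000 - p)^0 + (1572802276061396174047614549277117131969257571664290772119328960449/125000000000000000000000000000000000000000000000000000000000000000000000000000) := by ring
  have t0 : (0:ℝ) ≤ (77813124749644285546999414361642353177666563181571200007059545062601/58435479429314725569612406963615561328661504512) * (p - 709637/1000000)^1 * (719023/1000000 - p)^12 := mul_nonneg (mul_nonneg (by norm_num) (pow_nonneg hA 1)) (pow_nonneg hB 12)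
  have t1 : (0:ℝ) ≤ (123390518604487310490185395009474024027028245839808566827828055097635/7304434928664340696201550870451945166082688064) * (p - 709637/1000000)^2 * (719023/1000000 - p)^11 := mul_nonneg (mul_nonneg (by norm_num) (pow_nonneg hA 2)) (pow_nonneg hB 11)
  have t2 : (0:ℝ) ≤ (2868437340112040450568112458028488379133929475249573933690054542773031/29217739714657362784806203481807780664330752256) * (p - 709637/1000000)^3 * (719023/1000000 - p)^10 := mul_nonneg (mul_nonneg (by norm_num) (pow_nonneg hA 3)) (pow_nonneg hB 10)
  have t3 : (0:ℝ) ≤ (2524713271242464357495295502107117638000563139426836336203918434739475/7304434928664340696201550870451945166082688064) * (p - 709637/1000000)^4 * (719023/1000000 - p)^9 := mul_nonneg (mul_nonneg (by norm_num) (pow_nonneg hA 4)) (pow_nonneg hB 9)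
  have t4 : (0:ℝ) ≤ (47978124571875861390977479309892641062888938926248968765480907092948259/58435479429314725569612406963615561328661504512) * (p - 709637/1000000)^5 * (719023/1000000 - p)^8 := mul_nonneg (mul_nonneg (by norm_num) (pow_nonneg hA 5)) (pow_nonneg hB 8)
  have t5 : (0:ℝ) ≤ (5063097956978574543639933485214833465753350601251271611671127831616155/3652217464332170348100775435225972583041344032) * (p - 709637/1000000)^6 * (719023/1000000 - p)^7 := mul_nonneg (mul_nonneg (by norm_num) (pow_nonneg hA 6)) (pow_nonneg hB 7)
  have t6 : (0:ℝ) ≤ (24923787030392341916255827145369336136407755653309055821173771942672813/14608869857328681392403101740903890332165376128) * (p - 709637/1000000)^7 * (719023/1000000 - p)^6 := mul_nonneg (mul_nonneg (by norm_num) (pow_nonneg hA 7)) (pow_nonneg hB 6)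
  have t7 : (0:ℝ) ≤ (5631439452801755395590433034452504415091663161852449706748262604757255/3652217464332170348100775435225972583041344032) * (p - 709637/1000000)^8 * (719023/1000000 - p)^5 := mul_nonneg (mul_nonneg (by norm_num) (pow_nonneg hA 8)) (pow_nonneg hB 5)
  have t8 : (0:ℝ) ≤ (59354837206928266252690981120708639882034424114743763792386597106075455/58435479429314725569612406963615561328661504512) * (p - 709637/1000000)^9 * (719023/1000000 - p)^4 := mul_nonneg (mul_nonneg (by norm_num) (pow_nonneg hA 9)) (pow_nonneg hB 4)
  have t9 : (0:ℝ) ≤ (3474145645850535209066373570894605141942814482983416889079016150107975/7304434928664340696201550870451945166082688064) * (p - 709637/1000000)^10 * (719023/1000000 - p)^3 := mul_nonneg (mul_nonneg (by norm_num) (pow_nonneg hA 10)) (pow_nonneg hB 3)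
  have t10 : (0:ℝ) ≤ (4390605938052137967872720985891504920409872110091948245122842642945103/29217739714657362784806203481807780664330752256) * (p - 709637/1000000)^11 * (719023/1000000 - p)^2 := mul_nonneg (mul_nonneg (by norm_num) (pow_nonneg hA 11)) (pow_nonneg hB 2)
  have t11 : (0:ℝ) ≤ (210102263846913698355562040190104380558014073487524861237477501731135/7304434928664340696201550870451945166082688064) * (p - 709637/1000000)^12 * (719023/1000000 - p)^1 := mul_nonneg (mul_nonneg (by norm_num) (pow_nonneg hA 12)) (pow_nonneg hB 1)
  have t12 : (0:ℝ) ≤ (147402571388987190623276733149947179834476305347902172244367082692917/58435479429314725569612406963615561328661504512) * (p - 709637/1000000)^13 * (719023/1000000 - p)^0 := mul_nonneg (mul_nonneg (by norm_num) (pow_nonneg hA 13)) (pow_nonneg hB 0)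
  linarith only [key, t0, t1, t2, t3, t4, t5, t6, t7, t8, t9, t10, t11, t12]

set_option maxHeartbeats 1000000 in
private lemma aux_hf53 (p : ℝ) (hA : (0:ℝ) ≤ p - 709637/1000000) (hB : (0:ℝ) ≤ 719023/1000000 - p) : (0:ℝ) < ((14) + (-249)*p + (1942)*p^2 + (-8736)*p^3 + (25012)*p^4 + (-47300)*p^5 + (59097)*p^6 + (-47034)*p^7 + (21627)*p^8 + (-4374)*p^9) := by
  have key : (((14) + (-249)*p + (1942)*p^2 + (-8736)*p^3 + (25012)*p^4 + (-47300)*p^5 + (59097)*p^6 + (-47034)*p^7 + (21627)*p^8 + (-4374)*p^9):ℝ) = (12166537244047761991415755478272208691412677757/30117186848739174063012355584128) * (p - 709637/1000000)^1 * (719023/1000000 - p)^8 + (6351627271657145315868671841726719617823032565/1882324178046198378938272224008) * (p - 709637/1000000)^2 * (719023/1000000 - p)^7 + (92787580258879866372550131259842991050884266693/7529296712184793515753088896032) * (p - 709637/1000000)^3 * (719023/1000000 - p)^6 + (48381085854746553294570657323695890326829657055/1882324178046198378938272224008) * (p - 709637/1000000)^4 * (719023/1000000 - p)^5 + (504242798767621220623350936466069819711920927059/15058593424369587031506177792064)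 * (p - 709637/1000000)^5 * (719023/1000000 - p)^4 + (52524365940925876961428777310348383165466062155/1882324178046198378938272224008) * (p - 709637/1000000)^6 * (719023/1000000 - p)^3 + (109364655102210097717476846742978978975292796177/7529296712184793515753088896032) * (p - 709637/1000000)^7 * (719023/1000000 - p)^2 + (8128447945883767037486612936925349912457960465/1882324178046198378938272224008) * (p - 709637/1000000)^8 * (719023/1000000 - p)^1 + (16907355987631689576173585034090144097939636613/30117186848739174063012355584128) * (p - 709637/1000000)^9 * (719023/1000000 - p)^0 + (245917012710656585933017692493439014170993801/500000000000000000000000000000000000000000000000000000) := by ring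
  have t0 : (0:ℝ) ≤ (12166537244047761991415755478272208691412677757/30117186848739174063012355584128) * (p - 709637/1000000)^1 * (719023/1000000 - p)^8 := mul_nonneg (mul_nonneg (by norm_num) (pow_nonneg hA 1)) (pow_nonneg hB 8)
  have t1 : (0:ℝ) ≤ (6351627271657145315868671841726719617823032565/1882324178046198378938272224008) * (p - 709637/1000000)^2 * (719023/1000000 - p)^7 := mul_nonneg (mul_nonneg (by norm_num) (pow_nonneg hA 2)) (pow_nonneg hB 7)
  have t2 : (0:ℝ) ≤ (92787580258879866372550131259842991050884266693/7529296712184793515753088896032) * (p - 709637/1000000)^3 * (719023/1000000 - p)^6 := mul_nonneg (mul_nonneg (by norm_num) (pow_nonneg hA 3)) (pow_nonneg hB 6)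
  have t3 : (0:ℝ) ≤ (48381085854746553294570657323695890326829657055/1882324178046198378938272224008) * (p - 709637/1000000)^4 * (719023/1000000 - p)^5 := mul_nonneg (mul_nonneg (by norm_num) (pow_nonneg hA 4)) (pow_nonneg hB 5)
  have t4 : (0:ℝ) ≤ (504242798767621220623350936466069819711920927059/15058593424369587031506177792064) * (p - 709637/1000000)^5 * (719023/1000000 - p)^4 := mul_nonneg (mul_nonneg (by norm_num) (pow_nonneg hA 5)) (pow_nonneg hB 4)
  have t5 : (0:ℝ) ≤ (52524365940925876961428777310348383165466062155/1882324178046198378938272224008) * (p - 709637/1000000)^6 * (719023/1000000 - p)^3 := mul_nonneg (mul_nonneg (by norm_num) (pow_nonneg hA 6)) (pow_nonneg hB 3)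
  have t6 : (0:ℝ) ≤ (109364655102210097717476846742978978975292796177/7529296712184793515753088896032) * (p - 709637/1000000)^7 * (719023/1000000 - p)^2 := mul_nonneg (mul_nonneg (by norm_num) (pow_nonneg hA 7)) (pow_nonneg hB 2)
  have t7 : (0:ℝ) ≤ (8128447945883767037486612936925349912457960465/1882324178046198378938272224008) * (p - 709637/1000000)^8 * (719023/1000000 - p)^1 := mul_nonneg (mul_nonneg (by norm_num) (pow_nonneg hA 8)) (pow_nonneg hB 1)
  have t8 : (0:ℝ) ≤ (16907355987631689576173585034090144097939636613/30117186848739174063012355584128) * (p - 709637/1000000)^9 * (719023/1000000 - p)^0 := mul_nonneg (mul_nonneg (by norm_num) (pow_nonneg hA 9)) (pow_nonneg hB 0)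
  linarith only [key, t0, t1, t2, t3, t4, t5, t6, t7, t8]

set_option maxHeartbeats 1000000 in
private lemma aux_hf37 (p : ℝ) (hA : (0:ℝ) ≤ p - 709637/1000000) (hB : (0:ℝ) ≤ 719023/1000000 - p) : (0:ℝ) < ((28) + (-624)*p + (6251)*p^2 + (-37191)*p^3 + (146126)*p^4 + (-398332)*p^5 + (769002)*p^6 + (-1051641)*p^7 + (998433)*p^8 + (-626697)*p^9 + (234009)*p^10 + (-39366)*p^11) := by
  have key : (((28) + (-624)*p + (6251)*p^2 + (-37191)*p^3 + (146126)*p^4 + (-398332)*p^5 + (769002)*p^6 + (-1051641)*p^7 + (998433)*p^8 + (-626697)*p^9 + (234009)*p^10 + (-39366)*p^11):ℝ) = (1770585485248069823996486581120923598838033947423322563463/2653233689344627622472503237845502079488) * (p - 709637/1000000)^1 * (719023/1000000 - p)^10 + (4690407480621629608178728484439318875170569813001378661675/663308422336156905618125809461375519872) * (p - 709637/1000000)^2 * (719023/1000000 - p)^9 + (89402782491690314037887407356007072143048632454647849929845/2653233689344627622472503237845502079488) * (p - 709637/1000000)^3 * (719023/1000000 - p)^8 + (15768428808539907331294998051088238827437730900625583535525/165827105584039226404531452365343879968)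 * (p - 709637/1000000)^4 * (719023/1000000 - p)^7 + (233470486894712097083045826018784837643521186015785482413243/1326616844672313811236251618922751039744) * (p - 709637/1000000)^5 * (719023/1000000 - p)^6 + (74028969804083572787925638701210585344471274721740615417305/331654211168078452809062904730687759936) * (p - 709637/1000000)^6 * (719023/1000000 - p)^5 + (260655980295656911766089131361338182490540095660303354473645/1326616844672313811236251618922751039744) * (p - 709637/1000000)^7 * (719023/1000000 - p)^4 + (19654922828030170736063744908649291897815390751052711076525/165827105584039226404531452365343879968) * (p - 709637/1000000)^8 * (719023/1000000 - p)^3 + (124424009956620881067729961346366699726368680873780704806515/2653233689344627622472503237845502079488) * (p - 709637/1000000)^9 * (719023/1000000 - p)^2 + (7289009008346330632468921497454032114032663857155921555675/663308422336156905618125809461375519872) * (p - 709637/1000000)^10 * (719023/1000000 - p)^1 + (3072738259364285268654412108706856327692707227342425802433/2653233689344627622472503237845502079488) * (p - 709637/1000000)^11 * (719023/1000000 - p)^0 + (35788068235524282980307214400983143284503526611935335721/500000000000000000000000000000000000000000000000000000000000000000) := by ring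
  have t0 : (0:ℝ) ≤ (1770585485248069823996486581120923598838033947423322563463/2653233689344627622472503237845502079488) * (p - 709637/1000000)^1 * (719023/1000000 - p)^10 := mul_nonneg (mul_nonneg (by norm_num) (pow_nonneg hA 1)) (pow_nonneg hB 10)
  have t1 : (0:ℝ) ≤ (4690407480621629608178728484439318875170569813001378661675/663308422336156905618125809461375519872) * (p - 709637/1000000)^2 * (719023/1000000 - p)^9 := mul_nonneg (mul_nonneg (by norm_num) (pow_nonneg hA 2)) (pow_nonneg hB 9)
  have t2 : (0:ℝ) ≤ (89402782491690314037887407356007072143048632454647849929845/2653233689344627622472503237845502079488) * (p - 709637/1000000)^3 * (719023/1000000 - p)^8 := mul_nonneg (mul_nonneg (by norm_num) (pow_nonneg hA 3)) (pow_nonneg hB 8)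
  have t3 : (0:ℝ) ≤ (15768428808539907331294998051088238827437730900625583535525/165827105584039226404531452365343879968) * (p - 709637/1000000)^4 * (719023/1000000 - p)^7 := mul_nonneg (mul_nonneg (by norm_num) (pow_nonneg hA 4)) (pow_nonneg hB 7)
  have t4 : (0:ℝ) ≤ (233470486894712097083045826018784837643521186015785482413243/1326616844672313811236251618922751039744) * (p - 709637/1000000)^5 * (719023/1000000 - p)^6 := mul_nonneg (mul_nonneg (by norm_num) (pow_nonneg hA 5)) (pow_nonneg hB 6)
  have t5 : (0:ℝ) ≤ (74028969804083572787925638701210585344471274721740615417305/331654211168078452809062904730687759936) * (p - 709637/1000000)^6 * (719023/1000000 - p)^5 := mul_nonneg (mul_nonneg (by norm_num) (pow_nonneg hA 6)) (pow_nonneg hB 5)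
  have t6 : (0:ℝ) ≤ (260655980295656911766089131361338182490540095660303354473645/1326616844672313811236251618922751039744) * (p - 709637/1000000)^7 * (719023/1000000 - p)^4 := mul_nonneg (mul_nonneg (by norm_num) (pow_nonneg hA 7)) (pow_nonneg hB 4)
  have t7 : (0:ℝ) ≤ (19654922828030170736063744908649291897815390751052711076525/165827105584039226404531452365343879968) * (p - 709637/1000000)^8 * (719023/1000000 - p)^3 := mul_nonneg (mul_nonneg (by norm_num) (pow_nonneg hA 8)) (pow_nonneg hB 3)
  have t8 : (0:ℝ) ≤ (124424009956620881067729961346366699726368680873780704806515/2653233689344627622472503237845502079488) * (p - 709637/1000000)^9 * (719023/1000000 - p)^2 := mul_nonneg (mul_nonneg (by norm_num) (pow_nonneg hA 9)) (pow_nonneg hB 2)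
  have t9 : (0:ℝ) ≤ (7289009008346330632468921497454032114032663857155921555675/663308422336156905618125809461375519872) * (p - 709637/1000000)^10 * (719023/1000000 - p)^1 := mul_nonneg (mul_nonneg (by norm_num) (pow_nonneg hA 10)) (pow_nonneg hB 1)
  have t10 : (0:ℝ) ≤ (3072738259364285268654412108706856327692707227342425802433/2653233689344627622472503237845502079488) * (p - 709637/1000000)^11 * (719023/1000000 - p)^0 := mul_nonneg (mul_nonneg (by norm_num) (pow_nonneg hA 11)) (pow_nonneg hB 0)
  linarith only [key, t0, t1, t2, t3, t4, t5, t6, t7, t8, t9, t10]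

set_option maxHeartbeats 1000000 in
private lemma aux_hf71 (p : ℝ) (hA : (0:ℝ) ≤ p - 709637/1000000) (hB : (0:ℝ) ≤ 719023/1000000 - p) : (0:ℝ) < ((-6) + (105)*p + (-784)*p^2 + (3282)*p^3 + (-8457)*p^4 + (13769)*p^5 + (-13854)*p^6 + (7884)*p^7 + (-1944)*p^8) := by
  have key : (((-6) + (105)*p + (-784)*p^2 + (3282)*p^3 + (-8457)*p^4 + (13769)*p^5 + (-13854)*p^6 + (7884)*p^7 + (-1944)*p^8):ℝ) = (96344613169241101513931083111673882405/50136484605960962575598557) * (p - 709637/1000000)^0 * (719023/1000000 - p)^8 + (1494738220193408379960399185288368721261/100272969211921925151197114) * (p - 709637/1000000)^1 * (719023/1000000 - p)^7 + (2473480053341043221679956831655883965605/50136484605960962575598557) * (p - 709637/1000000)^2 * (719023/1000000 - p)^6 + (9059893657242281843068892917081429186567/100272969211921925151197114) * (p - 709637/1000000)^3 * (719023/1000000 - p)^5 + (4960354044316062779251706465880155561175/50136484605960962575598557) * (p - 709637/1000000)^4 * (719023/1000000 - p)^4 + (6497766265490573708237367380370074553907/100272969211921925151197114) * (p - 709637/1000000)^5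 * (719023/1000000 - p)^3 + (1178893565653002074762381995133790307935/50136484605960962575598557) * (p - 709637/1000000)^6 * (719023/1000000 - p)^2 + (365746410227365075297269491317062162121/100272969211921925151197114) * (p - 709637/1000000)^7 * (719023/1000000 - p)^1 + (46505084245697243427921906255533524445084717/125000000000000000000000000000000000000000000000) := by ring
  have t0 : (0:ℝ) ≤ (96344613169241101513931083111673882405/50136484605960962575598557) * (p - 709637/1000000)^0 * (719023/1000000 - p)^8 := mul_nonneg (mul_nonneg (by norm_num) (pow_nonneg hA 0)) (pow_nonneg hB 8)
  have t1 : (0:ℝ) ≤ (1494738220193408379960399185288368721261/100272969211921925151197114) * (p - 709637/1000000)^1 * (719023/1000000 - p)^7 := mul_nonneg (mul_nonneg (by norm_num) (pow_nonneg hA 1)) (pow_nonneg hB 7)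
  have t2 : (0:ℝ) ≤ (2473480053341043221679956831655883965605/50136484605960962575598557) * (p - 709637/1000000)^2 * (719023/1000000 - p)^6 := mul_nonneg (mul_nonneg (by norm_num) (pow_nonneg hA 2)) (pow_nonneg hB 6)
  have t3 : (0:ℝ) ≤ (9059893657242281843068892917081429186567/100272969211921925151197114) * (p - 709637/1000000)^3 * (719023/1000000 - p)^5 := mul_nonneg (mul_nonneg (by norm_num) (pow_nonneg hA 3)) (pow_nonneg hB 5)
  have t4 : (0:ℝ) ≤ (4960354044316062779251706465880155561175/50136484605960962575598557) * (p - 709637/1000000)^4 * (719023/1000000 - p)^4 := mul_nonneg (mul_nonneg (by norm_num) (pow_nonneg hA 4)) (pow_nonneg hB 4)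
  have t5 : (0:ℝ) ≤ (6497766265490573708237367380370074553907/100272969211921925151197114) * (p - 709637/1000000)^5 * (719023/1000000 - p)^3 := mul_nonneg (mul_nonneg (by norm_num) (pow_nonneg hA 5)) (pow_nonneg hB 3)
  have t6 : (0:ℝ) ≤ (1178893565653002074762381995133790307935/50136484605960962575598557) * (p - 709637/1000000)^6 * (719023/1000000 - p)^2 := mul_nonneg (mul_nonneg (by norm_num) (pow_nonneg hA 6)) (pow_nonneg hB 2)
  have t7 : (0:ℝ) ≤ (365746410227365075297269491317062162121/100272969211921925151197114) * (p - 709637/1000000)^7 * (719023/1000000 - p)^1 := mul_nonneg (mul_nonneg (by norm_num) (pow_nonneg hA 7)) (pow_nonneg hB 1)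
  linarith only [key, t0, t1, t2, t3, t4, t5, t6, t7]

set_option maxHeartbeats 1000000 in
private lemma aux_hf12 (p : ℝ) (hA : (0:ℝ) ≤ p - 709637/1000000) (hB : (0:ℝ) ≤ 719023/1000000 - p) : (0:ℝ) < ((-1) + (8)*p + (-25)*p^2 + (35)*p^3 + (-18)*p^4) := by
  have key : (((-1) + (8)*p + (-25)*p^2 + (35)*p^3 + (-18)*p^4):ℝ) = (3680173914757810/7950753889) * (p - 709637/1000000)^0 * (719023/1000000 - p)^4 + (11494289927253111/7950753889) * (p - 709637/1000000)^1 * (719023/1000000 - p)^3 + (11961834118730030/7950753889) * (p - 709637/1000000)^2 * (719023/1000000 - p)^2 + (319066247677287/611596453) * (p - 709637/1000000)^3 * (719023/1000000 - p)^1 + (13406243380765563353431/500000000000000000000000) := by ring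
  have t0 : (0:ℝ) ≤ (3680173914757810/7950753889) * (p - 709637/1000000)^0 * (719023/1000000 - p)^4 := mul_nonneg (mul_nonneg (by norm_num) (pow_nonneg hA 0)) (pow_nonneg hB 4)
  have t1 : (0:ℝ) ≤ (11494289927253111/7950753889) * (p - 709637/1000000)^1 * (719023/1000000 - p)^3 := mul_nonneg (mul_nonneg (by norm_num) (pow_nonneg hA 1)) (pow_nonneg hB 3)
  have t2 : (0:ℝ) ≤ (11961834118730030/7950753889) * (p - 709637/1000000)^2 * (719023/1000000 - p)^2 := mul_nonneg (mul_nonneg (by norm_num) (pow_nonneg hA 2)) (pow_nonneg hB 2)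
  have t3 : (0:ℝ) ≤ (319066247677287/611596453) * (p - 709637/1000000)^3 * (719023/1000000 - p)^1 := mul_nonneg (mul_nonneg (by norm_num) (pow_nonneg hA 3)) (pow_nonneg hB 1)
  linarith only [key, t0, t1, t2, t3]

set_option maxHeartbeats 1000000 in
private lemma aux_hf84 (p : ℝ) (hA : (0:ℝ) ≤ p - 709637/1000000) (hB : (0:ℝ) ≤ 719023/1000000 - p) : (0:ℝ) < ((-28) + (680)*p + (-7499)*p^2 + (49693)*p^3 + (-220508)*p^4 + (690584)*p^5 + (-1565666)*p^6 + (2589645)*p^7 + (-3101715)*p^8 + (2623563)*p^9 + (-1487403)*p^10 + (507384)*p^11 + (-78732)*p^12) := by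
  have key : (((-28) + (680)*p + (-7499)*p^2 + (49693)*p^3 + (-220508)*p^4 + (690584)*p^5 + (-1565666)*p^6 + (2589645)*p^7 + (-3101715)*p^8 + (2623563)*p^9 + (-1487403)*p^10 + (507384)*p^11 + (-78732)*p^12):ℝ) = (92795066289754462304358609428415365368188051784877421043007163/3112906426023584358065864423802235314759296) * (p - 709637/1000000)^1 * (719023/1000000 - p)^11 + (540116393808068106563418959625728553042426226794746397887037185/1556453213011792179032932211901117657379648) * (p - 709637/1000000)^2 * (719023/1000000 - p)^10 + (5712840388016750011121171232044364597227775414550244701662638755/3112906426023584358065864423802235314759296) * (p - 709637/1000000)^3 * (719023/1000000 - p)^9 + (9058951162110354420549742184375109386660825006778419286838063275/1556453213011792179032932211901117657379648) * (p - 709637/1000000)^4 * (719023/1000000 - p)^8 + (19143311757410176936270741111234591958227161474063712401901438339/1556453213011792179032932211901117657379648) * (p - 709637/1000000)^5 * (719023/1000000 - p)^7 + (14151532411182370229962347860587696505217342240052022581076068285/778226606505896089516466105950558828689824) * (p - 709637/1000000)^6 * (719023/1000000 - p)^6 + (29874833555470893967234086085796090831370995191943210230257910119/1556453213011792179032932211901117657379648)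 * (p - 709637/1000000)^7 * (719023/1000000 - p)^5 + (11256606641565626233502549237520105218812850735239501263975914275/778226606505896089516466105950558828689824) * (p - 709637/1000000)^8 * (719023/1000000 - p)^4 + (23740491170331455966975157818873038435529729587725935898168385055/3112906426023584358065864423802235314759296) * (p - 709637/1000000)^9 * (719023/1000000 - p)^3 + (4170488228375440880891066553088643681174898806350302334243619925/1556453213011792179032932211901117657379648) * (p - 709637/1000000)^10 * (719023/1000000 - p)^2 + (1757500626071813689523245036789958888407549184625155619196940463/3112906426023584358065864423802235314759296) * (p - 709637/1000000)^11 * (719023/1000000 - p)^1 + (84125048446101510990097285449064524305422887444718342307702335/1556453213011792179032932211901117657379648) * (p - 709637/1000000)^12 * (719023/1000000 - p)^0 + (7502503260690604111142663505378903208733465808346287974543277/250000000000000000000000000000000000000000000000000000000000000000000000) := by ring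
  have t0 : (0:ℝ) ≤ (92795066289754462304358609428415365368188051784877421043007163/3112906426023584358065864423802235314759296) * (p - 709637/1000000)^1 * (719023/1000000 - p)^11 := mul_nonneg (mul_nonneg (by norm_num) (pow_nonneg hA 1)) (pow_nonneg hB 11)
  have t1 : (0:ℝ) ≤ (540116393808068106563418959625728553042426226794746397887037185/1556453213011792179032932211901117657379648) * (p - 709637/1000000)^2 * (719023/1000000 - p)^10 := mul_nonneg (mul_nonneg (by norm_num) (pow_nonneg hA 2)) (pow_nonneg hB 10)
  have t2 : (0:ℝ) ≤ (5712840388016750011121171232044364597227775414550244701662638755/3112906426023584358065864423802235314759296) * (p - 709637/1000000)^3 * (719023/1000000 - p)^9 := mul_nonneg (mul_nonneg (by norm_num) (pow_nonneg hA 3)) (pow_nonneg hB 9)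
  have t3 : (0:ℝ) ≤ (9058951162110354420549742184375109386660825006778419286838063275/1556453213011792179032932211901117657379648) * (p - 709637/1000000)^4 * (719023/1000000 - p)^8 := mul_nonneg (mul_nonneg (by norm_num) (pow_nonneg hA 4)) (pow_nonneg hB 8)
  have t4 : (0:ℝ) ≤ (19143311757410176936270741111234591958227161474063712401901438339/1556453213011792179032932211901117657379648) * (p - 709637/1000000)^5 * (719023/1000000 - p)^7 := mul_nonneg (mul_nonneg (by norm_num) (pow_nonneg hA 5)) (pow_nonneg hB 7)
  have t5 : (0:ℝ) ≤ (14151532411182370229962347860587696505217342240052022581076068285/778226606505896089516466105950558828689824) * (p - 709637/1000000)^6 * (719023/1000000 - p)^6 := mul_nonneg (mul_nonneg (by norm_num) (pow_nonneg hA 6)) (pow_nonneg hB 6)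
  have t6 : (0:ℝ) ≤ (29874833555470893967234086085796090831370995191943210230257910119/1556453213011792179032932211901117657379648) * (p - 709637/1000000)^7 * (719023/1000000 - p)^5 := mul_nonneg (mul_nonneg (by norm_num) (pow_nonneg hA 7)) (pow_nonneg hB 5)
  have t7 : (0:ℝ) ≤ (11256606641565626233502549237520105218812850735239501263975914275/778226606505896089516466105950558828689824) * (p - 709637/1000000)^8 * (719023/1000000 - p)^4 := mul_nonneg (mul_nonneg (by norm_num) (pow_nonneg hA 8)) (pow_nonneg hB 4)
  have t8 : (0:ℝ) ≤ (23740491170331455966975157818873038435529729587725935898168385055/3112906426023584358065864423802235314759296) * (p - 709637/1000000)^9 * (719023/1000000 - p)^3 := mul_nonneg (mul_nonneg (by norm_num) (pow_nonneg hA 9)) (pow_nonneg hB 3)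
  have t9 : (0:ℝ) ≤ (4170488228375440880891066553088643681174898806350302334243619925/1556453213011792179032932211901117657379648) * (p - 709637/1000000)^10 * (719023/1000000 - p)^2 := mul_nonneg (mul_nonneg (by norm_num) (pow_nonneg hA 10)) (pow_nonneg hB 2)
  have t10 : (0:ℝ) ≤ (1757500626071813689523245036789958888407549184625155619196940463/3112906426023584358065864423802235314759296) * (p - 709637/1000000)^11 * (719023/1000000 - p)^1 := mul_nonneg (mul_nonneg (by norm_num) (pow_nonneg hA 11)) (pow_nonneg hB 1)
  have t11 : (0:ℝ) ≤ (84125048446101510990097285449064524305422887444718342307702335/1556453213011792179032932211901117657379648) * (p - 709637/1000000)^12 * (719023/1000000 - p)^0 := mul_nonneg (mul_nonneg (by norm_num) (pow_nonneg hA 12)) (pow_nonneg hB 0)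
  linarith only [key, t0, t1, t2, t3, t4, t5, t6, t7, t8, t9, t10, t11]

set_option maxHeartbeats 1000000 in
private lemma aux_hf46 (p : ℝ) (hA : (0:ℝ) ≤ p - 709637/1000000) (hB : (0:ℝ) ≤ 719023/1000000 - p) : (0:ℝ) < ((-14) + (277)*p + (-2440)*p^2 + (12620)*p^3 + (-42484)*p^4 + (97324)*p^5 + (-153697)*p^6 + (165228)*p^7 + (-115695)*p^8 + (47628)*p^9 + (-8748)*p^10) := by
  have key : (((-14) + (277)*p + (-2440)*p^2 + (12620)*p^3 + (-42484)*p^4 + (97324)*p^5 + (-153697)*p^6 + (165228)*p^7 + (-115695)*p^8 + (47628)*p^9 + (-8748)*p^10):ℝ) = (1275278307073726695625505332108121753440346848969005/70669978940566471938858492378156352) * (p - 709637/1000000)^1 * (719023/1000000 - p)^9 + (5992332770407602732969824637855468883378869926144525/35334989470283235969429246189078176) * (p - 709637/1000000)^2 * (719023/1000000 - p)^8 + (12508161007832282348360790857620491399651584400800315/17667494735141617984714623094539088) * (p - 709637/1000000)^3 * (719023/1000000 - p)^7 + (15223120534155981167089746887441668808234869399731725/8833747367570808992357311547269544) * (p -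 709637/1000000)^4 * (719023/1000000 - p)^6 + (95240263817666422668538163340057432889015777987867583/35334989470283235969429246189078176) * (p - 709637/1000000)^5 * (719023/1000000 - p)^5 + (49632297507328881981114365662449667305673105238938675/17667494735141617984714623094539088) * (p - 709637/1000000)^6 * (719023/1000000 - p)^4 + (34471530085918459288939529342703581140931123414262915/17667494735141617984714623094539088) * (p - 709637/1000000)^7 * (719023/1000000 - p)^3 + (7692367708957354427508632276594898917862119867006025/8833747367570808992357311547269544) * (p - 709637/1000000)^8 * (719023/1000000 - p)^2 + (16014741235826531914606231023749001300615688569197405/70669978940566471938858492378156352) * (p - 709637/1000000)^9 * (719023/1000000 - p)^1 + (925775019099017064174713261984804531050511800220725/35334989470283235969429246189078176) * (p - 709637/1000000)^10 * (719023/1000000 - p)^0 + (51553304793623914705240030001247074613764627460237/250000000000000000000000000000000000000000000000000000000000) := by ring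
  have t0 : (0:ℝ) ≤ (1275278307073726695625505332108121753440346848969005/70669978940566471938858492378156352) * (p - 709637/1000000)^1 * (719023/1000000 - p)^9 := mul_nonneg (mul_nonneg (by norm_num) (pow_nonneg hA 1)) (pow_nonneg hB 9)
  have t1 : (0:ℝ) ≤ (5992332770407602732969824637855468883378869926144525/35334989470283235969429246189078176) * (p - 709637/1000000)^2 * (719023/1000000 - p)^8 := mul_nonneg (mul_nonneg (by norm_num) (pow_nonneg hA 2)) (pow_nonneg hB 8)
  have t2 : (0:ℝ) ≤ (12508161007832282348360790857620491399651584400800315/17667494735141617984714623094539088) * (p - 709637/1000000)^3 * (719023/1000000 - p)^7 := mul_nonneg (mul_nonneg (by norm_num) (pow_nonneg hA 3)) (pow_nonneg hB 7)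
  have t3 : (0:ℝ) ≤ (15223120534155981167089746887441668808234869399731725/8833747367570808992357311547269544) * (p - 709637/1000000)^4 * (719023/1000000 - p)^6 := mul_nonneg (mul_nonneg (by norm_num) (pow_nonneg hA 4)) (pow_nonneg hB 6)
  have t4 : (0:ℝ) ≤ (95240263817666422668538163340057432889015777987867583/35334989470283235969429246189078176) * (p - 709637/1000000)^5 * (719023/1000000 - p)^5 := mul_nonneg (mul_nonneg (by norm_num) (pow_nonneg hA 5)) (pow_nonneg hB 5)
  have t5 : (0:ℝ) ≤ (49632297507328881981114365662449667305673105238938675/17667494735141617984714623094539088) * (p - 709637/1000000)^6 * (719023/1000000 - p)^4 := mul_nonneg (mul_nonneg (by norm_num) (pow_nonneg hA 6)) (pow_nonneg hB 4)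
  have t6 : (0:ℝ) ≤ (34471530085918459288939529342703581140931123414262915/17667494735141617984714623094539088) * (p - 709637/1000000)^7 * (719023/1000000 - p)^3 := mul_nonneg (mul_nonneg (by norm_num) (pow_nonneg hA 7)) (pow_nonneg hB 3)
  have t7 : (0:ℝ) ≤ (7692367708957354427508632276594898917862119867006025/8833747367570808992357311547269544) * (p - 709637/1000000)^8 * (719023/1000000 - p)^2 := mul_nonneg (mul_nonneg (by norm_num) (pow_nonneg hA 8)) (pow_nonneg hB 2)
  have t8 : (0:ℝ) ≤ (16014741235826531914606231023749001300615688569197405/70669978940566471938858492378156352) * (p - 709637/1000000)^9 * (719023/1000000 - p)^1 := mul_nonneg (mul_nonneg (by norm_num) (pow_nonneg hA 9)) (pow_nonneg hB 1)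
  have t9 : (0:ℝ) ≤ (925775019099017064174713261984804531050511800220725/35334989470283235969429246189078176) * (p - 709637/1000000)^10 * (719023/1000000 - p)^0 := mul_nonneg (mul_nonneg (by norm_num) (pow_nonneg hA 10)) (pow_nonneg hB 0)
  linarith only [key, t0, t1, t2, t3, t4, t5, t6, t7, t8, t9]

set_option maxHeartbeats 1000000 in
private lemma aux_hf6p (p : ℝ) (hA : (0:ℝ) ≤ p - 709637/1000000) (hB : (0:ℝ) ≤ 719023/1000000 - p) : (0:ℝ) < ((6) + (-93)*p + (598)*p^2 + (-2086)*p^3 + (4285)*p^4 + (-5199)*p^5 + (3456)*p^6 + (-972)*p^7) := by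
  have key : (((6) + (-93)*p + (598)*p^2 + (-2086)*p^3 + (4285)*p^4 + (-5199)*p^5 + (3456)*p^6 + (-972)*p^7):ℝ) = (8366097082578250849316717120677207/170931973938925080163984) * (p - 709637/1000000)^0 * (719023/1000000 - p)^7 + (13847562529488979578319281936238885/42732993484731270040996) * (p - 709637/1000000)^1 * (719023/1000000 - p)^6 + (152181463449277630288221784315096487/170931973938925080163984) * (p - 709637/1000000)^2 * (719023/1000000 - p)^5 + (27773870731089985632050782348790975/21366496742365635020498) * (p - 709637/1000000)^3 * (719023/1000000 - p)^4 + (181896667643182259338542007558162045/170931973938925080163984) * (p - 709637/1000000)^4 * (719023/1000000 - p)^3 + (19797912150474944558182704107102285/42732993484731270040996) * (p - 709637/1000000)^5 * (719023/1000000 - p)^2 + (14328636559683319794968871889149189/170931973938925080163984) * (p - 709637/1000000)^6 * (719023/1000000 - p)^1 + (212329683392599149075311297240625525379/250000000000000000000000000000000000000000) := by ring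
  have t0 : (0:ℝ) ≤ (8366097082578250849316717120677207/170931973938925080163984) * (p - 709637/1000000)^0 * (719023/1000000 - p)^7 := mul_nonneg (mul_nonneg (by norm_num) (pow_nonneg hA 0)) (pow_nonneg hB 7)
  have t1 : (0:ℝ) ≤ (13847562529488979578319281936238885/42732993484731270040996) * (p - 709637/1000000)^1 * (719023/1000000 - p)^6 := mul_nonneg (mul_nonneg (by norm_num) (pow_nonneg hA 1)) (pow_nonneg hB 6)
  have t2 : (0:ℝ) ≤ (152181463449277630288221784315096487/170931973938925080163984) * (p - 709637/1000000)^2 * (719023/1000000 - p)^5 := mul_nonneg (mul_nonneg (by norm_num) (pow_nonneg hA 2)) (pow_nonneg hB 5)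
  have t3 : (0:ℝ) ≤ (27773870731089985632050782348790975/21366496742365635020498) * (p - 709637/1000000)^3 * (719023/1000000 - p)^4 := mul_nonneg (mul_nonneg (by norm_num) (pow_nonneg hA 3)) (pow_nonneg hB 4)
  have t4 : (0:ℝ) ≤ (181896667643182259338542007558162045/170931973938925080163984) * (p - 709637/1000000)^4 * (719023/1000000 - p)^3 := mul_nonneg (mul_nonneg (by norm_num) (pow_nonneg hA 4)) (pow_nonneg hB 3)
  have t5 : (0:ℝ) ≤ (19797912150474944558182704107102285/42732993484731270040996) * (p - 709637/1000000)^5 * (719023/1000000 - p)^2 := mul_nonneg (mul_nonneg (by norm_num) (pow_nonneg hA 5)) (pow_nonneg hB 2)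
  have t6 : (0:ℝ) ≤ (14328636559683319794968871889149189/170931973938925080163984) * (p - 709637/1000000)^6 * (719023/1000000 - p)^1 := mul_nonneg (mul_nonneg (by norm_num) (pow_nonneg hA 6)) (pow_nonneg hB 1)
  linarith only [key, t0, t1, t2, t3, t4, t5, t6]

set_option maxHeartbeats 1000000 in
private lemma aux_hf9h (p : ℝ) (hA : (0:ℝ) ≤ p - 709637/1000000) (hB : (0:ℝ) ≤ 719023/1000000 - p) : (0:ℝ) < ((-38) + (777)*p + (-7088)*p^2 + (38082)*p^3 + (-133683)*p^4 + (320759)*p^5 + (-533145)*p^6 + (606393)*p^7 + (-451737)*p^8 + (199017)*p^9 + (-39366)*p^10) := by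
  have key : (((-38) + (777)*p + (-7088)*p^2 + (38082)*p^3 + (-133683)*p^4 + (320759)*p^5 + (-533145)*p^6 + (606393)*p^7 + (-451737)*p^8 + (199017)*p^9 + (-39366)*p^10):ℝ) = (4598790791456055320587704762988132049528211761638475/70669978940566471938858492378156352) * (p - 709637/1000000)^0 * (719023/1000000 - p)^10 + (87259524586768606138628489017324850737235542948240545/141339957881132943877716984756312704) * (p - 709637/1000000)^1 * (719023/1000000 - p)^9 + (45975810649186323400152115042559175538065976889101775/17667494735141617984714623094539088) * (p - 709637/1000000)^2 * (719023/1000000 - p)^8 + (226015858508620737891978299789364163135037659973261335/35334989470283235969429246189078176) * (p - 709637/1000000)^3 * (719023/1000000 - p)^7 + (357022053162938246651116405902701981807860950264960925/35334989470283235969429246189078176) * (p - 709637/1000000)^4 * (719023/1000000 - p)^6 + (751722666770051627891716341854575131639240186946953947/70669978940566471938858492378156352) * (p - 709637/1000000)^5 * (719023/1000000 - p)^5 + (131859679640431360848069641057871742580394714192056475/17667494735141617984714623094539088) * (p - 709637/1000000)^6 * (719023/1000000 - p)^4 + (118918340966643770001184611356703646993049644821424735/35334989470283235969429246189078176) * (p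 - 709637/1000000)^7 * (719023/1000000 - p)^3 + (62543928783032196967162826748614427122278077615448275/70669978940566471938858492378156352) * (p - 709637/1000000)^8 * (719023/1000000 - p)^2 + (14615918089746635659809866806182726201498689448296145/141339957881132943877716984756312704) * (p - 709637/1000000)^9 * (719023/1000000 - p)^1 + (8837887083134725572521665023643938665897980995736733/500000000000000000000000000000000000000000000000000000000000) := by ring
  have t0 : (0:ℝ) ≤ (4598790791456055320587704762988132049528211761638475/70669978940566471938858492378156352) * (p - 709637/1000000)^0 * (719023/1000000 - p)^10 := mul_nonneg (mul_nonneg (by norm_num) (pow_nonneg hA 0)) (pow_nonneg hB 10)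
  have t1 : (0:ℝ) ≤ (87259524586768606138628489017324850737235542948240545/141339957881132943877716984756312704) * (p - 709637/1000000)^1 * (719023/1000000 - p)^9 := mul_nonneg (mul_nonneg (by norm_num) (pow_nonneg hA 1)) (pow_nonneg hB 9)
  have t2 : (0:ℝ) ≤ (45975810649186323400152115042559175538065976889101775/17667494735141617984714623094539088) * (p - 709637/1000000)^2 * (719023/1000000 - p)^8 := mul_nonneg (mul_nonneg (by norm_num) (pow_nonneg hA 2)) (pow_nonneg hB 8)
  have t3 : (0:ℝ) ≤ (226015858508620737891978299789364163135037659973261335/35334989470283235969429246189078176) * (p - 709637/1000000)^3 * (719023/1000000 - p)^7 := mul_nonneg (mul_nonneg (by norm_num) (pow_nonneg hA 3)) (pow_nonneg hB 7)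
  have t4 : (0:ℝ) ≤ (357022053162938246651116405902701981807860950264960925/35334989470283235969429246189078176) * (p - 709637/1000000)^4 * (719023/1000000 - p)^6 := mul_nonneg (mul_nonneg (by norm_num) (pow_nonneg hA 4)) (pow_nonneg hB 6)
  have t5 : (0:ℝ) ≤ (751722666770051627891716341854575131639240186946953947/70669978940566471938858492378156352) * (p - 709637/1000000)^5 * (719023/1000000 - p)^5 := mul_nonneg (mul_nonneg (by norm_num) (pow_nonneg hA 5)) (pow_nonneg hB 5)
  have t6 : (0:ℝ) ≤ (131859679640431360848069641057871742580394714192056475/17667494735141617984714623094539088) * (p - 709637/1000000)^6 * (719023/1000000 - p)^4 := mul_nonneg (mul_nonneg (by norm_num) (pow_nonneg hA 6)) (pow_nonneg hB 4)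
  have t7 : (0:ℝ) ≤ (118918340966643770001184611356703646993049644821424735/35334989470283235969429246189078176) * (p - 709637/1000000)^7 * (719023/1000000 - p)^3 := mul_nonneg (mul_nonneg (by norm_num) (pow_nonneg hA 7)) (pow_nonneg hB 3)
  have t8 : (0:ℝ) ≤ (62543928783032196967162826748614427122278077615448275/70669978940566471938858492378156352) * (p - 709637/1000000)^8 * (719023/1000000 - p)^2 := mul_nonneg (mul_nonneg (by norm_num) (pow_nonneg hA 8)) (pow_nonneg hB 2)
  have t9 : (0:ℝ) ≤ (14615918089746635659809866806182726201498689448296145/141339957881132943877716984756312704) * (p - 709637/1000000)^9 * (719023/1000000 - p)^1 := mul_nonneg (mul_nonneg (by norm_num) (pow_nonneg hA 9)) (pow_nonneg hB 1)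
  linarith only [key, t0, t1, t2, t3, t4, t5, t6, t7, t8, t9]

set_option maxHeartbeats 4000000 in
/-- For `0.709637 ≤ p ≤ 0.719023`, with `p_i = α_p^i(p)`, the ordering
`1/2 < p₉ < p₅ < p₃ < p₇ < p₁ < p₂ < 2/3 < p₈ < p₄ < p₆ < p` holds. -/
theorem iterate_ordering_second_range (p : ℝ) (hp : 0.709637 ≤ p) (hp1 : p ≤ 0.719023) :
    1/2 < (alphaMap p)^[9] p ∧
    (alphaMap p)^[9] p < (alphaMap p)^[5] p ∧
    (alphaMap p)^[5] p < (alphaMap p)^[3] p ∧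
    (alphaMap p)^[3] p < (alphaMap p)^[7] p ∧
    (alphaMap p)^[7] p < (alphaMap p)^[1] p ∧
    (alphaMap p)^[1] p < (alphaMap p)^[2] p ∧
    (alphaMap p)^[2] p < 2/3 ∧
    2/3 < (alphaMap p)^[8] p ∧
    (alphaMap p)^[8] p < (alphaMap p)^[4] p ∧
    (alphaMap p)^[4] p < (alphaMap p)^[6] p ∧
    (alphaMap p)^[6] p < p := by
  have hA : (0:ℝ) ≤ p - 709637/1000000 := by norm_num at hp; linarith
  have hB : (0:ℝ) ≤ 719023/1000000 - p := by norm_num at hp1; linarith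
  have hD1 := aux_hD1 p hA hB
  have hD2 := aux_hD2 p hA hB
  have hD3 := aux_hD3 p hA hB
  have hD4 := aux_hD4 p hA hB
  have hD5 := aux_hD5 p hA hB
  have hD6 := aux_hD6 p hA hB
  have hD7 := aux_hD7 p hA hB
  have hD8 := aux_hD8 p hA hB
  have hD9 := aux_hD9 p hA hB
  have hbr1 := aux_hbr1 p hA hB
  have hbr2 := aux_hbr2 p hA hB
  have hbr3 := aux_hbr3 p hA hB
  have hbr4 := aux_hbr4 p hA hB
  have hbr5 := aux_hbr5 p hA hB
  have hbr6 := aux_hbr6 p hA hB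
  have hbr7 := aux_hbr7 p hA hB
  have hbr8 := aux_hbr8 p hA hB
  have hf95 := aux_hf95 p hA hB
  have hf53 := aux_hf53 p hA hB
  have hf37 := aux_hf37 p hA hB
  have hf71 := aux_hf71 p hA hB
  have hf12 := aux_hf12 p hA hB
  have hf84 := aux_hf84 p hA hB
  have hf46 := aux_hf46 p hA hB
  have hf6p := aux_hf6p p hA hB
  have hf9h := aux_hf9h p hA hB
  have hc1 : ((1) + (-3)*p + (3)*p^2)/((1)*p) < 2/3 := by rw [div_lt_iff₀ hD1]; linarith only [hbr1]
  have hc2 : ((2) + (-10)*p + (17)*p^2 + (-9)*p^3)/((1) + (-3)*p + (3)*p^2) < 2/3 := by rw [div_lt_iff₀ hD2]; linarith only [hbr2]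
  have hc3 : ((3) + (-21)*p + (55)*p^2 + (-63)*p^3 + (27)*p^4)/((2) + (-10)*p + (17)*p^2 + (-9)*p^3) < 2/3 := by rw [div_lt_iff₀ hD3]; linarith only [hbr3]
  have hc4 : ¬ (((4) + (-37)*p + (136)*p^2 + (-248)*p^3 + (225)*p^4 + (-81)*p^5)/((3) + (-21)*p + (55)*p^2 + (-63)*p^3 + (27)*p^4) < 2/3) := not_lt.mpr (by rw [le_div_iff₀ hD4]; linarith only [hbr4])
  have hc5 : ((-1) + (22)*p + (-150)*p^2 + (483)*p^3 + (-816)*p^4 + (702)*p^5 + (-243)*p^6)/((4) + (-37)*p + (136)*p^2 + (-248)*p^3 + (225)*p^4 + (-81)*p^5) < 2/3 := by rw [div_lt_iff₀ hD5]; linarith only [hbr5]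
  have hc6 : ¬ (((-6) + (92)*p + (-576)*p^2 + (1936)*p^3 + (-3802)*p^4 + (4383)*p^5 + (-2754)*p^6 + (729)*p^7)/((-1) + (22)*p + (-150)*p^2 + (483)*p^3 + (-816)*p^4 + (702)*p^5 + (-243)*p^6) < 2/3) := not_lt.mpr (by rw [le_div_iff₀ hD6]; linarith only [hbr6])
  have hc7 : ((5) + (-86)*p + (658)*p^2 + (-2881)*p^3 + (7828)*p^4 + (-13455)*p^5 + (14256)*p^6 + (-8505)*p^7 + (2187)*p^8)/((-6) + (92)*p + (-576)*p^2 + (1936)*p^3 + (-3802)*p^4 + (4383)*p^5 + (-2754)*p^6 + (729)*p^7) < 2/3 := by rw [div_lt_iff₀ hD7]; linarith only [hbr7]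
  have hc8 : ¬ (((16) + (-291)*p + (2334)*p^2 + (-10824)*p^3 + (31973)*p^4 + (-62381)*p^5 + (80397)*p^6 + (-66015)*p^7 + (31347)*p^8 + (-6561)*p^9)/((5) + (-86)*p + (658)*p^2 + (-2881)*p^3 + (7828)*p^4 + (-13455)*p^5 + (14256)*p^6 + (-8505)*p^7 + (2187)*p^8) < 2/3) := not_lt.mpr (by rw [le_div_iff₀ hD8]; linarith only [hbr8])
  have e1 : (alphaMap p)^[1] p = ((1) + (-3)*p + (3)*p^2)/((1)*p) := by
    rw [Function.iterate_one]
    unfold alphaMap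
    rw [if_neg (not_lt.mpr (by linarith : (2:ℝ)/3 ≤ p))]
    have hp0 : p ≠ 0 := by intro h; rw [h] at hA; norm_num at hA
    field_simp
    ring
  have e2 : (alphaMap p)^[2] p = ((2) + (-10)*p + (17)*p^2 + (-9)*p^3)/((1) + (-3)*p + (3)*p^2) := by
    rw [Function.iterate_succ_apply' (alphaMap p) 1 p, e1]
    unfold alphaMap
    rw [if_pos hc1]
    have hn : (((1) + (-3)*p + (3)*p^2):ℝ) ≠ 0 := ne_of_gt hD2
    have hd : (((1)*p):ℝ) ≠ 0 := ne_of_gt hD1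
    rw [aux_stepL _ _ _ _ hn hd, div_eq_div_iff hn hn]
    ring
  have e3 : (alphaMap p)^[3] p = ((3) + (-21)*p + (55)*p^2 + (-63)*p^3 + (27)*p^4)/((2) + (-10)*p + (17)*p^2 + (-9)*p^3) := by
    rw [Function.iterate_succ_apply' (alphaMap p) 2 p, e2]
    unfold alphaMap
    rw [if_pos hc2]
    have hn : (((2) + (-10)*p + (17)*p^2 + (-9)*p^3):ℝ) ≠ 0 := ne_of_gt hD3
    have hd : (((1) + (-3)*p + (3)*p^2):ℝ) ≠ 0 := ne_of_gt hD2
    rw [aux_stepL _ _ _ _ hn hd, div_eq_div_iff hn hn]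
    ring
  have e4 : (alphaMap p)^[4] p = ((4) + (-37)*p + (136)*p^2 + (-248)*p^3 + (225)*p^4 + (-81)*p^5)/((3) + (-21)*p + (55)*p^2 + (-63)*p^3 + (27)*p^4) := by
    rw [Function.iterate_succ_apply' (alphaMap p) 3 p, e3]
    unfold alphaMap
    rw [if_pos hc3]
    have hn : (((3) + (-21)*p + (55)*p^2 + (-63)*p^3 + (27)*p^4):ℝ) ≠ 0 := ne_of_gt hD4
    have hd : (((2) + (-10)*p + (17)*p^2 + (-9)*p^3):ℝ) ≠ 0 := ne_of_gt hD3
    rw [aux_stepL _ _ _ _ hn hd, div_eq_div_iff hn hn]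
    ring
  have e5 : (alphaMap p)^[5] p = ((-1) + (22)*p + (-150)*p^2 + (483)*p^3 + (-816)*p^4 + (702)*p^5 + (-243)*p^6)/((4) + (-37)*p + (136)*p^2 + (-248)*p^3 + (225)*p^4 + (-81)*p^5) := by
    rw [Function.iterate_succ_apply' (alphaMap p) 4 p, e4]
    unfold alphaMap
    rw [if_neg hc4]
    have hn : (((4) + (-37)*p + (136)*p^2 + (-248)*p^3 + (225)*p^4 + (-81)*p^5):ℝ) ≠ 0 := ne_of_gt hD5
    have hd : (((3) + (-21)*p + (55)*p^2 + (-63)*p^3 + (27)*p^4):ℝ) ≠ 0 := ne_of_gt hD4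
    rw [aux_stepH _ _ _ _ hn hd, div_eq_div_iff hn hn]
    ring
  have e6 : (alphaMap p)^[6] p = ((-6) + (92)*p + (-576)*p^2 + (1936)*p^3 + (-3802)*p^4 + (4383)*p^5 + (-2754)*p^6 + (729)*p^7)/((-1) + (22)*p + (-150)*p^2 + (483)*p^3 + (-816)*p^4 + (702)*p^5 + (-243)*p^6) := by
    rw [Function.iterate_succ_apply' (alphaMap p) 5 p, e5]
    unfold alphaMap
    rw [if_pos hc5]
    have hn : (((-1) + (22)*p + (-150)*p^2 + (483)*p^3 + (-816)*p^4 + (702)*p^5 + (-243)*p^6):ℝ) ≠ 0 := ne_of_gt hD6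
    have hd : (((4) + (-37)*p + (136)*p^2 + (-248)*p^3 + (225)*p^4 + (-81)*p^5):ℝ) ≠ 0 := ne_of_gt hD5
    rw [aux_stepL _ _ _ _ hn hd, div_eq_div_iff hn hn]
    ring
  have e7 : (alphaMap p)^[7] p = ((5) + (-86)*p + (658)*p^2 + (-2881)*p^3 + (7828)*p^4 + (-13455)*p^5 + (14256)*p^6 + (-8505)*p^7 + (2187)*p^8)/((-6) + (92)*p + (-576)*p^2 + (1936)*p^3 + (-3802)*p^4 + (4383)*p^5 + (-2754)*p^6 + (729)*p^7) := by
    rw [Function.iterate_succ_apply' (alphaMap p) 6 p, e6]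
    unfold alphaMap
    rw [if_neg hc6]
    have hn : (((-6) + (92)*p + (-576)*p^2 + (1936)*p^3 + (-3802)*p^4 + (4383)*p^5 + (-2754)*p^6 + (729)*p^7):ℝ) ≠ 0 := ne_of_gt hD7
    have hd : (((-1) + (22)*p + (-150)*p^2 + (483)*p^3 + (-816)*p^4 + (702)*p^5 + (-243)*p^6):ℝ) ≠ 0 := ne_of_gt hD6
    rw [aux_stepH _ _ _ _ hn hd, div_eq_div_iff hn hn]
    ring
  have e8 : (alphaMap p)^[8] p = ((16) + (-291)*p + (2334)*p^2 + (-10824)*p^3 + (31973)*p^4 + (-62381)*p^5 + (80397)*p^6 + (-66015)*p^7 + (31347)*p^8 + (-6561)*p^9)/((5) + (-86)*p + (658)*p^2 + (-2881)*p^3 + (7828)*p^4 + (-13455)*p^5 + (14256)*p^6 + (-8505)*p^7 + (2187)*p^8) := by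
    rw [Function.iterate_succ_apply' (alphaMap p) 7 p, e7]
    unfold alphaMap
    rw [if_pos hc7]
    have hn : (((5) + (-86)*p + (658)*p^2 + (-2881)*p^3 + (7828)*p^4 + (-13455)*p^5 + (14256)*p^6 + (-8505)*p^7 + (2187)*p^8):ℝ) ≠ 0 := ne_of_gt hD8
    have hd : (((-6) + (92)*p + (-576)*p^2 + (1936)*p^3 + (-3802)*p^4 + (4383)*p^5 + (-2754)*p^6 + (729)*p^7):ℝ) ≠ 0 := ne_of_gt hD7
    rw [aux_stepL _ _ _ _ hn hd, div_eq_div_iff hn hn]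
    ring
  have e9 : (alphaMap p)^[9] p = ((-11) + (243)*p + (-2377)*p^2 + (13629)*p^3 + (-50855)*p^4 + (129189)*p^5 + (-226374)*p^6 + (270189)*p^7 + (-210195)*p^8 + (96228)*p^9 + (-19683)*p^10)/((16) + (-291)*p + (2334)*p^2 + (-10824)*p^3 + (31973)*p^4 + (-62381)*p^5 + (80397)*p^6 + (-66015)*p^7 + (31347)*p^8 + (-6561)*p^9) := by
    rw [Function.iterate_succ_apply' (alphaMap p) 8 p, e8]
    unfold alphaMap
    rw [if_neg hc8]
    have hn : (((16) + (-291)*p + (2334)*p^2 + (-10824)*p^3 + (31973)*p^4 + (-62381)*p^5 + (80397)*p^6 + (-66015)*p^7 + (31347)*p^8 + (-6561)*p^9):ℝ) ≠ 0 := ne_of_gt hD9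
    have hd : (((5) + (-86)*p + (658)*p^2 + (-2881)*p^3 + (7828)*p^4 + (-13455)*p^5 + (14256)*p^6 + (-8505)*p^7 + (2187)*p^8):ℝ) ≠ 0 := ne_of_gt hD8
    rw [aux_stepH _ _ _ _ hn hd, div_eq_div_iff hn hn]
    ring
  refine ⟨?_, ?_, ?_, ?_, ?_, ?_, ?_, ?_, ?_, ?_, ?_⟩
  · rw [e9, lt_div_iff₀ hD9]; linarith only [hf9h]
  · rw [e9, e5, div_lt_div_iff₀ hD9 hD5]; linarith only [hf95]
  · rw [e5, e3, div_lt_div_iff₀ hD5 hD3]; linarith only [hf53]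
  · rw [e3, e7, div_lt_div_iff₀ hD3 hD7]; linarith only [hf37]
  · rw [e7, e1, div_lt_div_iff₀ hD7 hD1]; linarith only [hf71]
  · rw [e1, e2, div_lt_div_iff₀ hD1 hD2]; linarith only [hf12]
  · rw [e2, div_lt_iff₀ hD2]; linarith only [hbr2]
  · rw [e8, lt_div_iff₀ hD8]; linarith only [hbr8]
  · rw [e8, e4, div_lt_div_iff₀ hD8 hD4]; linarith only [hf84]
  · rw [e4, e6, div_lt_div_iff₀ hD4 hD6]; linarith only [hf46]
  · rw [e6, div_lt_iff₀ hD6]; linarith only [hf6p]
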